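/- arXiv:math/0606594 — 5 statements merged into one kernel-verified Lean document; each statement's English description precedes it below -/
import Mathlib

section
/- (Bartle–Graves Selection Theorem.) Let E and F be Banach spaces, and let q : E → F be a continuous surjective linear map. Then there exists a continuous function g : F → E (not necessarily linear) such that q ∘ g = id_F. -/
open Set Function Filter Topology

/-- Auxiliary lemma for Bartle–Graves: a continuous "approximate section" of a surjective
continuous linear map, with linear norm control. -/
theorem bartle_graves_aux {𝕜 : Type*} [RCLike 𝕜]
    {E F : Type*} [NormedAddCommGroup E] [NormedSpace 𝕜 E] [CompleteSpace E]
    [NormedAddCommGroup F] [NormedSpace 𝕜 F] [CompleteSpace F]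
    (q : E →L[𝕜] F) (hq : Function.Surjective q) :
    ∃ C' : ℝ, 0 ≤ C' ∧ ∃ h : F → E, Continuous h ∧ (∀ ξ, ‖h ξ‖ ≤ C' * ‖ξ‖) ∧
      ∀ ξ, ‖q (h ξ) - ξ‖ ≤ (1 / 2) * ‖ξ‖ := by
  classical
  obtain ⟨σ, -⟩ := q.exists_nonlinearRightInverse_of_surjective (LinearMap.range_eq_top.2 hq)
  set C : ℝ := (σ.nnnorm : ℝ) with hCdef
  have hC : 0 ≤ C := σ.nnnorm.coe_nonneg
  set Y := {ξ : F // ξ ≠ 0}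
  set U : Y → Set Y := fun i => {ξ : Y | ‖(ξ : F) - (i : F)‖ < ‖(i : F)‖ / 4} with hU
  have hUo : ∀ i, IsOpen (U i) := by
    intro i
    have : U i = (fun ξ : Y => (ξ : F)) ⁻¹' Metric.ball (i : F) (‖(i : F)‖ / 4) := by
      ext ξ; simp [U, Metric.mem_ball, dist_eq_norm]
    rw [this]
    exact Metric.isOpen_ball.preimage continuous_subtype_val
  have hUc : (univ : Set Y) ⊆ ⋃ i, U i := by
    intro ξ _
    refine mem_iUnion.2 ⟨ξ, ?_⟩
    have : (0 : ℝ) < ‖(ξ : F)‖ := norm_pos_iff.2 ξ.2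
    simp only [U, mem_setOf_eq, sub_self, norm_zero]
    linarith
  obtain ⟨f, hf⟩ := PartitionOfUnity.exists_isSubordinate isClosed_univ U hUo hUc
  -- the approximate section on nonzero vectors
  set hY : Y → E := fun ξ => ∑ᶠ i, ((f i ξ : ℝ) : 𝕜) • σ (i : F) with hhY
  have hsupp : ∀ ξ : Y, (support fun i => ((f i ξ : ℝ) : 𝕜) • σ (i : F)) ⊆ ↑(f.finsupport ξ) := by
    intro ξ i hi
    rw [Finset.mem_coe, f.mem_finsupport]
    intro h0
    apply hi
    simp [h0]
  have hYsum : ∀ ξ : Y, hY ξ = ∑ i ∈ f.finsupport ξ, ((f i ξ : ℝ) : 𝕜) • σ (i : F) := fun ξ =>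
    finsum_eq_sum_of_support_subset _ (hsupp ξ)
  have hYcont : Continuous hY := by
    refine continuous_finsum (fun i => ?_) ?_
    · exact (RCLike.continuous_ofReal.comp (f i).continuous).smul continuous_const
    · refine f.locallyFinite.subset fun i => ?_
      intro ξ hξ
      simp only [mem_support] at hξ ⊢
      intro h0
      apply hξ
      simp [h0]
  -- key geometric facts on the cover
  have hkey : ∀ (ξ : Y) (i : Y), f i ξ ≠ 0 →
      ‖(i : F)‖ ≤ (4 / 3) * ‖(ξ : F)‖ ∧ ‖(i : F) - (ξ : F)‖ ≤ (1 / 3) * ‖(ξ : F)‖ := by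
    intro ξ i hne
    have hin : ξ ∈ U i := hf i (subset_closure (mem_support.2 hne))
    have h1 : ‖(ξ : F) - (i : F)‖ < ‖(i : F)‖ / 4 := hin
    have h2 : ‖(i : F)‖ - ‖(ξ : F)‖ ≤ ‖(i : F) - (ξ : F)‖ := norm_sub_norm_le _ _
    have h3 : ‖(i : F) - (ξ : F)‖ = ‖(ξ : F) - (i : F)‖ := norm_sub_rev _ _
    constructor <;> [linarith; linarith]
  have hcoef : ∀ (ξ : Y) (i : Y), ‖((f i ξ : ℝ) : 𝕜)‖ = f i ξ := by
    intro ξ i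
    rw [RCLike.norm_ofReal, abs_of_nonneg (f.nonneg i ξ)]
  have hsum1 : ∀ ξ : Y, ∑ i ∈ f.finsupport ξ, f i ξ = 1 := fun ξ =>
    f.sum_finsupport (mem_univ ξ)
  -- bound on hY
  have hYbound : ∀ ξ : Y, ‖hY ξ‖ ≤ (4 / 3 * C) * ‖(ξ : F)‖ := by
    intro ξ
    rw [hYsum]
    calc ‖∑ i ∈ f.finsupport ξ, ((f i ξ : ℝ) : 𝕜) • σ (i : F)‖
        ≤ ∑ i ∈ f.finsupport ξ, ‖((f i ξ : ℝ) : 𝕜) • σ (i : F)‖ := norm_sum_le _ _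
      _ ≤ ∑ i ∈ f.finsupport ξ, f i ξ * (C * (4 / 3 * ‖(ξ : F)‖)) := by
          refine Finset.sum_le_sum fun i _ => ?_
          rw [norm_smul, hcoef]
          rcases eq_or_ne (f i ξ) 0 with h0 | h0
          · simp [h0]
          · refine mul_le_mul_of_nonneg_left ?_ (f.nonneg i ξ)
            calc ‖σ (i : F)‖ ≤ C * ‖(i : F)‖ := σ.bound _
              _ ≤ C * (4 / 3 * ‖(ξ : F)‖) :=
                  mul_le_mul_of_nonneg_left (by simpa using (hkey ξ i h0).1) hC
      _ = (4 / 3 * C) * ‖(ξ : F)‖ := by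
          rw [← Finset.sum_mul, hsum1]; ring
  -- approximation property
  have hYapprox : ∀ ξ : Y, ‖q (hY ξ) - (ξ : F)‖ ≤ (1 / 2) * ‖(ξ : F)‖ := by
    intro ξ
    have hq1 : q (hY ξ) = ∑ i ∈ f.finsupport ξ, ((f i ξ : ℝ) : 𝕜) • (i : F) := by
      rw [hYsum, map_sum]
      refine Finset.sum_congr rfl fun i _ => ?_
      rw [map_smul, σ.right_inv]
    have hq2 : (ξ : F) = ∑ i ∈ f.finsupport ξ, ((f i ξ : ℝ) : 𝕜) • (ξ : F) := by
      rw [← Finset.sum_smul, ← RCLike.ofReal_sum, hsum1, RCLike.ofReal_one, one_smul]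
    calc ‖q (hY ξ) - (ξ : F)‖
        = ‖∑ i ∈ f.finsupport ξ, ((f i ξ : ℝ) : 𝕜) • ((i : F) - (ξ : F))‖ := by
          rw [hq1]; nth_rw 1 [hq2]
          rw [← Finset.sum_sub_distrib]
          congr 1
          exact Finset.sum_congr rfl fun i _ => (smul_sub _ _ _).symm
      _ ≤ ∑ i ∈ f.finsupport ξ, ‖((f i ξ : ℝ) : 𝕜) • ((i : F) - (ξ : F))‖ := norm_sum_le _ _
      _ ≤ ∑ i ∈ f.finsupport ξ, f i ξ * ((1 / 3) * ‖(ξ : F)‖) := by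
          refine Finset.sum_le_sum fun i _ => ?_
          rw [norm_smul, hcoef]
          rcases eq_or_ne (f i ξ) 0 with h0 | h0
          · simp [h0]
          · exact mul_le_mul_of_nonneg_left (hkey ξ i h0).2 (f.nonneg i ξ)
      _ = (1 / 3) * ‖(ξ : F)‖ := by rw [← Finset.sum_mul, hsum1, one_mul]
      _ ≤ (1 / 2) * ‖(ξ : F)‖ := by
          have : (0 : ℝ) ≤ ‖(ξ : F)‖ := norm_nonneg _
          linarith
  -- extend to all of F
  set hbar : F → E := fun ξ => if hξ : ξ = 0 then 0 else hY ⟨ξ, hξ⟩ with hhbar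
  have hbar0 : hbar 0 = 0 := dif_pos rfl
  have hbarbound : ∀ ξ, ‖hbar ξ‖ ≤ (4 / 3 * C) * ‖ξ‖ := by
    intro ξ
    rcases eq_or_ne ξ 0 with rfl | hξ
    · simp [hbar0]
    · rw [hhbar]; simp only [dif_neg hξ]; exact hYbound ⟨ξ, hξ⟩
  have hbarapprox : ∀ ξ, ‖q (hbar ξ) - ξ‖ ≤ (1 / 2) * ‖ξ‖ := by
    intro ξ
    rcases eq_or_ne ξ 0 with rfl | hξ
    · simp [hbar0]
    · rw [hhbar]; simp only [dif_neg hξ]; exact hYapprox ⟨ξ, hξ⟩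
  have hco : ContinuousOn hbar {(0 : F)}ᶜ := by
    rw [continuousOn_iff_continuous_restrict]
    have hres : restrict {(0 : F)}ᶜ hbar = fun x => hY ⟨x.1, x.2⟩ := by
      funext x
      simp only [restrict, hhbar]
      exact dif_neg x.2
    change Continuous (restrict {(0 : F)}ᶜ hbar)
    rw [hres]
    exact hYcont.comp (continuous_subtype_val.subtype_mk _)
  have hbarcont : Continuous hbar := by
    rw [continuous_iff_continuousAt]
    intro x
    rcases eq_or_ne x 0 with rfl | hx
    · rw [ContinuousAt, hbar0]
      refine squeeze_zero_norm hbarbound ?_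
      have h1 : Tendsto (fun ξ : F => (4 / 3 * C) * ‖ξ‖) (𝓝 0) (𝓝 ((4 / 3 * C) * ‖(0 : F)‖)) :=
        (continuous_const.mul continuous_norm).tendsto 0
      simpa using h1
    · exact hco.continuousAt (isOpen_compl_singleton.mem_nhds hx)
  exact ⟨4 / 3 * C, by positivity, hbar, hbarcont, hbarbound, hbarapprox⟩

/-- **Bartle–Graves Selection Theorem.** If `q : E → F` is a continuous surjective
linear map between Banach spaces, then there is a continuous (not necessarily linear)
function `g : F → E` with `q ∘ g = id`. -/
theorem bartle_graves_selection {𝕜 : Type*} [RCLike 𝕜]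
    {E F : Type*} [NormedAddCommGroup E] [NormedSpace 𝕜 E] [CompleteSpace E]
    [NormedAddCommGroup F] [NormedSpace 𝕜 F] [CompleteSpace F]
    (q : E →L[𝕜] F) (hq : Function.Surjective q) :
    ∃ g : F → E, Continuous g ∧ ∀ ξ : F, q (g ξ) = ξ := by
  obtain ⟨C, hC, h, hcont, hbound, happrox⟩ := bartle_graves_aux q hq
  set T : F → F := fun ξ => ξ - q (h ξ) with hT
  have hTcont : Continuous T := continuous_id.sub (q.continuous.comp hcont)
  have hTn : ∀ ξ, ‖T ξ‖ ≤ (1 / 2) * ‖ξ‖ := by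
    intro ξ
    rw [hT]
    calc ‖ξ - q (h ξ)‖ = ‖q (h ξ) - ξ‖ := norm_sub_rev _ _
      _ ≤ (1 / 2) * ‖ξ‖ := happrox ξ
  have hTiter : ∀ (n : ℕ) (ξ), ‖T^[n] ξ‖ ≤ (1 / 2) ^ n * ‖ξ‖ := by
    intro n
    induction n with
    | zero => intro ξ; simp
    | succ n ih =>
      intro ξ
      rw [Function.iterate_succ_apply']
      calc ‖T (T^[n] ξ)‖ ≤ (1 / 2) * ‖T^[n] ξ‖ := hTn _
        _ ≤ (1 / 2) * ((1 / 2) ^ n * ‖ξ‖) := by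
            have := ih ξ; linarith
        _ = (1 / 2) ^ (n + 1) * ‖ξ‖ := by ring
  have hterm : ∀ (n : ℕ) (ξ), ‖h (T^[n] ξ)‖ ≤ C * (1 / 2) ^ n * ‖ξ‖ := by
    intro n ξ
    calc ‖h (T^[n] ξ)‖ ≤ C * ‖T^[n] ξ‖ := hbound _
      _ ≤ C * ((1 / 2) ^ n * ‖ξ‖) := mul_le_mul_of_nonneg_left (hTiter n ξ) hC
      _ = C * (1 / 2) ^ n * ‖ξ‖ := by ring
  have hgeom : Summable fun n : ℕ => (1 / 2 : ℝ) ^ n :=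
    summable_geometric_of_lt_one (by norm_num) (by norm_num)
  have hsummable : ∀ ξ, Summable fun n : ℕ => h (T^[n] ξ) := by
    intro ξ
    refine Summable.of_norm ?_
    refine Summable.of_nonneg_of_le (fun n => norm_nonneg _) (fun n => hterm n ξ) ?_
    simpa [mul_assoc] using (hgeom.mul_left C).mul_right ‖ξ‖
  set g : F → E := fun ξ => ∑' n : ℕ, h (T^[n] ξ) with hg
  have hqg : ∀ ξ, q (g ξ) = ξ := by
    intro ξ
    have hs : HasSum (fun n : ℕ => h (T^[n] ξ)) (g ξ) := (hsummable ξ).hasSum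
    have hs2 : HasSum (fun n : ℕ => q (h (T^[n] ξ))) (q (g ξ)) := q.hasSum hs
    have key : ∀ n : ℕ, q (h (T^[n] ξ)) = T^[n] ξ - T^[n + 1] ξ := by
      intro n
      rw [Function.iterate_succ_apply', hT]
      rw [sub_sub_cancel]
    have h3 : Tendsto (fun n => ∑ i ∈ Finset.range n, q (h (T^[i] ξ))) atTop (𝓝 (q (g ξ))) :=
      hs2.tendsto_sum_nat
    have h4 : (fun n => ∑ i ∈ Finset.range n, q (h (T^[i] ξ))) = fun n => ξ - T^[n] ξ := by
      funext n
      simp only [key]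
      rw [Finset.sum_range_sub' (fun i => T^[i] ξ)]
      simp
    rw [h4] at h3
    have h5 : Tendsto (fun n : ℕ => ξ - T^[n] ξ) atTop (𝓝 ξ) := by
      have hz : Tendsto (fun n : ℕ => T^[n] ξ) atTop (𝓝 0) := by
        refine squeeze_zero_norm (fun n => hTiter n ξ) ?_
        have := (tendsto_pow_atTop_nhds_zero_of_lt_one (by norm_num : (0:ℝ) ≤ 1/2)
          (by norm_num : (1/2 : ℝ) < 1)).mul_const ‖ξ‖
        simpa using this
      simpa using tendsto_const_nhds.sub hz
    exact tendsto_nhds_unique h3 h5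
  have hgcont : Continuous g := by
    rw [continuous_iff_continuousAt]
    intro ξ₀
    have hmem : ξ₀ ∈ Metric.ball (0 : F) (‖ξ₀‖ + 1) := by
      simp only [Metric.mem_ball, dist_zero_right]
      linarith
    refine ContinuousOn.continuousAt ?_ (Metric.isOpen_ball.mem_nhds hmem)
    have hu : Summable fun n : ℕ => C * (1 / 2) ^ n * (‖ξ₀‖ + 1) := by
      simpa [mul_assoc] using (hgeom.mul_left C).mul_right (‖ξ₀‖ + 1)
    have hto : TendstoUniformlyOn
        (fun (t : Finset ℕ) ξ => ∑ n ∈ t, h (T^[n] ξ)) g atTop (Metric.ball (0 : F) (‖ξ₀‖ + 1)) := by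
      refine tendstoUniformlyOn_tsum hu fun n ξ hξ => ?_
      have hξn : ‖ξ‖ ≤ ‖ξ₀‖ + 1 := by
        rw [Metric.mem_ball, dist_zero_right] at hξ
        linarith
      calc ‖h (T^[n] ξ)‖ ≤ C * (1 / 2) ^ n * ‖ξ‖ := hterm n ξ
        _ ≤ C * (1 / 2) ^ n * (‖ξ₀‖ + 1) := by
            refine mul_le_mul_of_nonneg_left hξn (by positivity)
    refine hto.continuousOn (Filter.Frequently.of_forall fun t => ?_)
    exact (continuous_finset_sum t fun n _ => hcont.comp (hTcont.iterate n)).continuousOn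
  exact ⟨g, hgcont, hqg⟩
end

section
/- Let E and F be Banach spaces, and let q : E → F be a continuous surjective linear map. Let M ⊆ E and N ⊆ F be closed linear subspaces such that q(M) = N, and let f : N → M be a continuous function such that q(f(ξ)) = ξ for all ξ ∈ N. Then there exists a continuous function g : F → E such that q ∘ g = id_F and g restricted to N equals f. -/
open Set Function Metric

section BG

variable {𝕜 : Type*} [RCLike 𝕜]
variable {E F : Type*} [NormedAddCommGroup E] [NormedSpace 𝕜 E] [CompleteSpace E]
    [NormedAddCommGroup F] [NormedSpace 𝕜 F] [CompleteSpace F]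

/-- Approximate continuous section via a partition of unity. -/
lemma bg_approx (q : E →L[𝕜] F) {C : ℝ} (hC0 : 0 ≤ C)
    (hC : ∀ y : F, ∃ x, q x = y ∧ ‖x‖ ≤ C * ‖y‖) {ε : ℝ} (hε : 0 < ε) :
    ∃ w : F → E, Continuous w ∧ (∀ y, ‖q (w y) - y‖ ≤ ε) ∧
      ∀ y, ‖w y‖ ≤ C * (‖y‖ + ε) := by
  choose σ hσq hσn using hC
  obtain ⟨ρ, hρ⟩ := PartitionOfUnity.exists_isSubordinate (ι := F) (X := F) isClosed_univ
    (fun i => Metric.ball i ε) (fun i => Metric.isOpen_ball)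
    (fun x _ => Set.mem_iUnion.2 ⟨x, Metric.mem_ball_self hε⟩)
  set w : F → E := fun y => ∑ᶠ i, ((ρ i y : ℝ) : 𝕜) • σ i with hw
  have hsupp : ∀ y, (Function.support fun i => ((ρ i y : ℝ) : 𝕜) • σ i) ⊆ ρ.finsupport y := by
    intro y i hi
    have : ρ i y ≠ 0 := by
      intro h
      apply hi
      simp [h]
    simpa [PartitionOfUnity.mem_finsupport] using this
  have hwy : ∀ y, w y = ∑ i ∈ ρ.finsupport y, ((ρ i y : ℝ) : 𝕜) • σ i := fun y =>
    finsum_eq_sum_of_support_subset _ (by exact_mod_cast hsupp y)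
  have hmem : ∀ y, ∀ i ∈ ρ.finsupport y, ‖i - y‖ ≤ ε := by
    intro y i hi
    have h1 : y ∈ Function.support (ρ i) := (ρ.mem_finsupport y).1 hi
    have h2 : y ∈ Metric.ball i ε := hρ i (subset_tsupport _ h1)
    have := mem_ball.1 h2
    rw [dist_comm] at this
    simpa [← dist_eq_norm] using this.le
  have hone : ∀ y, ∑ i ∈ ρ.finsupport y, ρ i y = 1 := fun y =>
    ρ.sum_finsupport (Set.mem_univ y)
  refine ⟨w, ?_, ?_, ?_⟩
  · refine continuous_finsum (fun i => ?_) (ρ.locallyFinite.subset fun i => ?_)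
    · exact (RCLike.continuous_ofReal.comp (ρ i).continuous).smul continuous_const
    · intro y hy
      have : ρ i y ≠ 0 := by
        intro h; apply hy; simp [h]
      simpa [Function.mem_support] using this
  · intro y
    have hq : q (w y) = ∑ i ∈ ρ.finsupport y, ((ρ i y : ℝ) : 𝕜) • i := by
      rw [hwy, map_sum]
      exact Finset.sum_congr rfl fun i _ => by rw [q.map_smul, hσq]
    have hy : y = ∑ i ∈ ρ.finsupport y, ((ρ i y : ℝ) : 𝕜) • y := by
      rw [← Finset.sum_smul]
      have : (∑ i ∈ ρ.finsupport y, ((ρ i y : ℝ) : 𝕜)) = ((1 : ℝ) : 𝕜) := by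
        rw [← RCLike.ofReal_sum, hone]
      rw [this]; simp
    have hexp : (∑ i ∈ ρ.finsupport y, ((ρ i y : ℝ) : 𝕜) • (i - y)) = q (w y) - y := by
      simp only [smul_sub]
      rw [Finset.sum_sub_distrib, ← hq, ← hy]
    calc ‖q (w y) - y‖ = ‖∑ i ∈ ρ.finsupport y, ((ρ i y : ℝ) : 𝕜) • (i - y)‖ := by
          rw [hexp]
      _ ≤ ∑ i ∈ ρ.finsupport y, ‖((ρ i y : ℝ) : 𝕜) • (i - y)‖ := norm_sum_le _ _
      _ ≤ ∑ i ∈ ρ.finsupport y, ρ i y * ε := by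
          refine Finset.sum_le_sum fun i hi => ?_
          rw [norm_smul, RCLike.norm_ofReal, abs_of_nonneg (ρ.nonneg i y)]
          exact mul_le_mul_of_nonneg_left (hmem y i hi) (ρ.nonneg i y)
      _ = ε := by rw [← Finset.sum_mul, hone, one_mul]
  · intro y
    calc ‖w y‖ ≤ ∑ i ∈ ρ.finsupport y, ‖((ρ i y : ℝ) : 𝕜) • σ i‖ := by
          rw [hwy]; exact norm_sum_le _ _
      _ ≤ ∑ i ∈ ρ.finsupport y, ρ i y * (C * (‖y‖ + ε)) := by
          refine Finset.sum_le_sum fun i hi => ?_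
          rw [norm_smul, RCLike.norm_ofReal, abs_of_nonneg (ρ.nonneg i y)]
          refine mul_le_mul_of_nonneg_left ?_ (ρ.nonneg i y)
          refine (hσn i).trans (mul_le_mul_of_nonneg_left ?_ hC0)
          have h1 : ‖i‖ - ‖y‖ ≤ ‖i - y‖ := norm_sub_norm_le i y
          linarith [hmem y i hi]
      _ = C * (‖y‖ + ε) := by rw [← Finset.sum_mul, hone, one_mul]

/-- Bartle–Graves: a surjective continuous linear map between Banach spaces has a
continuous section vanishing at `0`. -/
lemma bg_section (q : E →L[𝕜] F) (hq : Function.Surjective q) :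
    ∃ s : F → E, Continuous s ∧ (∀ y, q (s y) = y) ∧ s 0 = 0 := by
  have hrange : LinearMap.range (q : E →ₗ[𝕜] F) = ⊤ := (LinearMap.range_eq_top (f := (q : E →ₗ[𝕜] F))).2 hq
  set fsymm := q.nonlinearRightInverseOfSurjective hrange
  set C : ℝ := (fsymm.nnnorm : ℝ) with hCdef
  have hC0 : 0 ≤ C := fsymm.nnnorm.coe_nonneg
  have hC : ∀ y : F, ∃ x, q x = y ∧ ‖x‖ ≤ C * ‖y‖ := fun y =>
    ⟨fsymm y, fsymm.right_inv y, fsymm.bound y⟩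
  choose W hWc hWq hWn using fun n : ℕ =>
    bg_approx q hC0 hC (pow_pos (by norm_num : (0:ℝ) < 1/2) n)
  set r : ℕ → F → F := fun n => Nat.rec _root_.id (fun n rn y => rn y - q (W n (rn y))) n
    with hrdef
  have hr0 : ∀ y, r 0 y = y := fun _ => rfl
  have hrS : ∀ n y, r (n + 1) y = r n y - q (W n (r n y)) := fun _ _ => rfl
  have hrc : ∀ n, Continuous (r n) := by
    intro n
    induction n with
    | zero => exact continuous_id
    | succ n ih => exact ih.sub (q.continuous.comp ((hWc n).comp ih))
  have hrb : ∀ n y, ‖r (n + 1) y‖ ≤ (1/2 : ℝ) ^ n := by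
    intro n y
    rw [hrS]
    have := hWq n (r n y)
    calc ‖r n y - q (W n (r n y))‖ = ‖q (W n (r n y)) - r n y‖ := norm_sub_rev _ _
      _ ≤ (1/2 : ℝ) ^ n := this
  set u : ℕ → F → E := fun n y => W n (r n y) with hudef
  have hub : ∀ n y, ‖u (n + 1) y‖ ≤ 3 * C * (1/2 : ℝ) ^ n := by
    intro n y
    have h1 : ‖u (n + 1) y‖ ≤ C * (‖r (n + 1) y‖ + (1/2 : ℝ) ^ (n + 1)) := hWn (n + 1) _
    have h2 : ‖r (n + 1) y‖ ≤ (1/2 : ℝ) ^ n := hrb n y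
    have h3 : (1/2 : ℝ) ^ (n + 1) ≤ (1/2 : ℝ) ^ n := by
      exact pow_le_pow_of_le_one (by norm_num) (by norm_num) (Nat.le_succ n)
    nlinarith [pow_pos (by norm_num : (0:ℝ) < 1/2) n]
  have hbsum : Summable fun n : ℕ => 3 * C * (1/2 : ℝ) ^ n :=
    (summable_geometric_of_lt_one (by norm_num) (by norm_num)).mul_left _
  set g : F → E := fun y => u 0 y + ∑' n, u (n + 1) y with hgdef
  have hgc : Continuous g := by
    refine ((hWc 0).comp (hrc 0)).add ?_
    exact continuous_tsum (fun n => (hWc (n + 1)).comp (hrc (n + 1))) hbsum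
      (fun n y => hub n y)
  have hsum : ∀ y, Summable fun n => u (n + 1) y := fun y =>
    Summable.of_norm_bounded hbsum (fun n => hub n y)
  refine ⟨fun y => g y - g 0, (hgc.sub continuous_const), fun y => ?_, by simp⟩
  have key : ∀ y, q (g y) = y := by
    intro y
    have htel : ∀ N, ∑ n ∈ Finset.range N, q (u n y) = y - r N y := by
      intro N
      induction N with
      | zero => simp [hr0]
      | succ N ih =>
        rw [Finset.sum_range_succ, ih, hrS]
        abel
    have hqsum : Summable fun n => q (u (n + 1) y) :=
      Summable.of_norm_bounded (hbsum.mul_left ‖q‖) (fun n => by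
        calc ‖q (u (n + 1) y)‖ ≤ ‖q‖ * ‖u (n + 1) y‖ := q.le_opNorm _
          _ ≤ ‖q‖ * (3 * C * (1/2 : ℝ) ^ n) :=
            mul_le_mul_of_nonneg_left (hub n y) (norm_nonneg q))
    have hrlim : Filter.Tendsto (fun N => r N y) Filter.atTop (nhds 0) := by
      rw [← Filter.tendsto_add_atTop_iff_nat 1]
      apply squeeze_zero_norm (fun N => hrb N y)
      exact tendsto_pow_atTop_nhds_zero_of_lt_one (by norm_num) (by norm_num)
    -- partial sums of q (u n y) tend to y
    have hpartial : Filter.Tendsto (fun N => ∑ n ∈ Finset.range N, q (u n y))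
        Filter.atTop (nhds y) := by
      simp only [htel]
      simpa using Filter.Tendsto.sub tendsto_const_nhds hrlim
    have hqsumfull : Summable fun n => q (u n y) := by
      rw [← summable_nat_add_iff 1]
      exact hqsum
    have hval : ∑' n, q (u n y) = y :=
      tendsto_nhds_unique hqsumfull.hasSum.tendsto_sum_nat hpartial
    have hsplit : ∑' n, q (u n y) = q (u 0 y) + ∑' n, q (u (n + 1) y) :=
      Summable.tsum_eq_zero_add hqsumfull
    show q (u 0 y + ∑' n, u (n + 1) y) = y
    rw [map_add, ContinuousLinearMap.map_tsum q (hsum y), ← hsplit, hval]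
  rw [map_sub, key y, key 0]
  simp

end BG

/-- Relative Bartle–Graves selection: a continuous section of a bounded linear
surjection `q : E → F` which is prescribed on a closed subspace `N ⊆ F` (taking values
in a closed subspace `M ⊆ E` with `q(M) = N`) by a given continuous section `f`. -/
theorem relative_bartle_graves_selection {𝕜 : Type*} [RCLike 𝕜]
    {E F : Type*} [NormedAddCommGroup E] [NormedSpace 𝕜 E] [CompleteSpace E]
    [NormedAddCommGroup F] [NormedSpace 𝕜 F] [CompleteSpace F]
    (q : E →L[𝕜] F) (hq : Function.Surjective q)
    (M : Submodule 𝕜 E) (hM : IsClosed (M : Set E))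
    (N : Submodule 𝕜 F) (hN : IsClosed (N : Set F))
    (hMN : q '' (M : Set E) = (N : Set F))
    (f : N → E) (hf_cont : Continuous f)
    (hf_mem : ∀ ξ : N, f ξ ∈ M)
    (hf_sec : ∀ ξ : N, q (f ξ) = ξ) :
    ∃ g : F → E, Continuous g ∧ (∀ ξ : F, q (g ξ) = ξ) ∧ ∀ ξ : N, g ξ = f ξ := by
  haveI : IsClosed (M : Set E) := hM
  haveI : IsClosed (N : Set F) := hN
  -- quotient maps as continuous linear maps
  let πM : E →L[𝕜] E ⧸ M := LinearMap.mkContinuous M.mkQ 1 (fun x => by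
    simpa using Submodule.Quotient.norm_mk_le M x)
  let πN : F →L[𝕜] F ⧸ N := LinearMap.mkContinuous N.mkQ 1 (fun x => by
    simpa using Submodule.Quotient.norm_mk_le N x)
  -- the induced map on quotients
  have hker : M ≤ LinearMap.ker (N.mkQ.comp (q : E →ₗ[𝕜] F)) := by
    intro x hx
    have : q x ∈ (N : Set F) := by rw [← hMN]; exact Set.mem_image_of_mem q hx
    simpa [LinearMap.mem_ker, Submodule.Quotient.mk_eq_zero] using this
  let qbarₗ : E ⧸ M →ₗ[𝕜] F ⧸ N := Submodule.liftQ M (N.mkQ.comp (q : E →ₗ[𝕜] F)) hker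
  have hqbar_mk : ∀ x : E, qbarₗ (Submodule.Quotient.mk x) = Submodule.Quotient.mk (q x) :=
    fun x => rfl
  have hqbar_bound : ∀ z : E ⧸ M, ‖qbarₗ z‖ ≤ (‖q‖ + 1) * ‖z‖ := by
    intro z
    refine le_of_forall_pos_le_add fun ε hε => ?_
    obtain ⟨x, hx, hxn⟩ := Submodule.Quotient.norm_mk_lt z
      (show 0 < ε / (‖q‖ + 1) by positivity)
    have h1 : ‖qbarₗ z‖ ≤ ‖q x‖ := by
      rw [← hx, hqbar_mk]
      exact Submodule.Quotient.norm_mk_le N (q x)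
    have h2 : ‖q x‖ ≤ ‖q‖ * ‖x‖ := q.le_opNorm x
    have h3 : ‖q‖ * ‖x‖ ≤ (‖q‖ + 1) * (‖z‖ + ε / (‖q‖ + 1)) := by
      have hq0 : (0:ℝ) ≤ ‖q‖ := norm_nonneg _
      have : ‖q‖ * ‖x‖ ≤ (‖q‖ + 1) * ‖x‖ := by nlinarith [norm_nonneg x]
      refine this.trans ?_
      exact mul_le_mul_of_nonneg_left hxn.le (by positivity)
    have h4 : (‖q‖ + 1) * (‖z‖ + ε / (‖q‖ + 1)) = (‖q‖ + 1) * ‖z‖ + ε := by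
      field_simp
    linarith
  let qbar : E ⧸ M →L[𝕜] F ⧸ N := LinearMap.mkContinuous qbarₗ (‖q‖ + 1) hqbar_bound
  have hqbar_surj : Function.Surjective qbar := by
    intro z
    obtain ⟨y, rfl⟩ := Submodule.mkQ_surjective N z
    obtain ⟨x, rfl⟩ := hq y
    exact ⟨Submodule.Quotient.mk x, rfl⟩
  have hπM_surj : Function.Surjective πM := Submodule.mkQ_surjective M
  obtain ⟨sbar, hsbar_c, hsbar_sec, hsbar0⟩ := bg_section qbar hqbar_surj
  obtain ⟨t, ht_c, ht_sec, ht0⟩ := bg_section πM hπM_surj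
  -- h : F → E
  set h : F → E := fun ξ => t (sbar (πN ξ)) with hhdef
  have hh_c : Continuous h := ht_c.comp (hsbar_c.comp πN.continuous)
  have hh_zero : ∀ ξ : F, ξ ∈ N → h ξ = 0 := by
    intro ξ hξ
    have : πN ξ = 0 := (Submodule.Quotient.mk_eq_zero N).2 hξ
    rw [hhdef]
    simp only [this, hsbar0, ht0]
  have hmemN : ∀ ξ : F, ξ - q (h ξ) ∈ N := by
    intro ξ
    have h1 : πM (h ξ) = sbar (πN ξ) := ht_sec _
    have h2 : Submodule.Quotient.mk (q (h ξ)) = πN ξ := by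
      have := hqbar_mk (h ξ)
      calc (Submodule.Quotient.mk (q (h ξ)) : F ⧸ N) = qbar (πM (h ξ)) := (hqbar_mk _).symm
        _ = qbar (sbar (πN ξ)) := by rw [h1]
        _ = πN ξ := hsbar_sec _
    exact (Submodule.Quotient.eq N).1 h2.symm
  refine ⟨fun ξ => h ξ + f ⟨ξ - q (h ξ), hmemN ξ⟩, ?_, ?_, ?_⟩
  · refine hh_c.add (hf_cont.comp ?_)
    exact Continuous.subtype_mk (continuous_id.sub (q.continuous.comp hh_c)) _
  · intro ξ
    show q (h ξ + f ⟨ξ - q (h ξ), hmemN ξ⟩) = ξ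
    rw [map_add, hf_sec]
    simp
  · intro ξ
    show h (ξ : F) + f ⟨(ξ : F) - q (h (ξ : F)), hmemN _⟩ = f ξ
    have h0 : h (ξ : F) = 0 := hh_zero ξ ξ.2
    have he : (⟨(ξ : F) - q (h (ξ : F)), hmemN _⟩ : N) = ξ := by
      ext
      simp [h0]
    rw [he, h0, zero_add]
end

section
/- Let F be a Banach space and let N ⊆ F be a closed linear subspace. Then there exists a continuous retraction h : F → F, i.e. a continuous (not necessarily linear) map such that h(ξ) ∈ N for all ξ ∈ F and h(ξ) = ξ for all ξ ∈ N. -/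
open Set Metric

/-- Every closed linear subspace `N` of a Banach space `F` admits a continuous
(not necessarily linear) retraction `h : F → F` onto `N`. -/
theorem exists_continuous_retraction_onto_closed_subspace {𝕜 : Type*} [RCLike 𝕜]
    {F : Type*} [NormedAddCommGroup F] [NormedSpace 𝕜 F] [CompleteSpace F]
    (N : Submodule 𝕜 F) (hN : IsClosed (N : Set F)) :
    ∃ h : F → F, Continuous h ∧ (∀ ξ : F, h ξ ∈ N) ∧ ∀ ξ ∈ N, h ξ = ξ := by
  classical
  have instR : NormedSpace ℝ F := NormedSpace.restrictScalars ℝ 𝕜 F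
  have instT : IsScalarTower ℝ 𝕜 F := Real.isScalarTower
  have hne : (N : Set F).Nonempty := ⟨0, N.zero_mem⟩
  -- the open complement
  set U : Set F := (N : Set F)ᶜ with hU_def
  have hUopen : IsOpen U := hN.isOpen_compl
  -- distance to N
  set d : F → ℝ := fun x => infDist x (N : Set F) with hd_def
  have hd_pos : ∀ x ∈ U, 0 < d x := fun x hx =>
    (hN.notMem_iff_infDist_pos hne).1 hx
  -- the covering of U by small balls
  set W : U → Set U := fun c => Subtype.val ⁻¹' Metric.ball (c : F) (d c / 4) with hW_def
  have hWopen : ∀ c, IsOpen (W c) := fun c =>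
    Metric.isOpen_ball.preimage continuous_subtype_val
  have hWcover : (univ : Set U) ⊆ ⋃ c, W c := by
    intro y _
    exact mem_iUnion.2 ⟨y, by
      simp only [W, mem_preimage, Metric.mem_ball, dist_self]
      exact div_pos (hd_pos _ y.2) (by norm_num)⟩
  -- a subordinate partition of unity on U
  obtain ⟨ρ, hρ⟩ := PartitionOfUnity.exists_isSubordinate (ι := U) (X := U)
    isClosed_univ W hWopen hWcover
  -- choose nearby points of N for each center
  have hex : ∀ c : U, ∃ y ∈ (N : Set F), dist (c : F) y < 2 * d c := by
    intro c
    exact (infDist_lt_iff hne).1 (by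
      have := hd_pos _ c.2
      linarith [le_refl (d c)])
  choose p hpN hpd using hex
  -- the Dugundji map on U
  set g : U → F := fun y => ∑ᶠ c, ρ c y • p c with hg_def
  have hg_cont : Continuous g :=
    ρ.continuous_finsum_smul (g := fun c _ => p c) (fun c x _ => continuousAt_const)
  have hg_sum : ∀ y : U, g y = ∑ c ∈ ρ.finsupport y, ρ c y • p c := fun y =>
    (ρ.sum_finsupport_smul_eq_finsum (fun c _ => p c)).symm
  have hg_mem : ∀ y : U, g y ∈ N := by
    intro y
    rw [hg_sum y]
    refine Submodule.sum_mem N fun c _ => ?_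
    rw [RCLike.real_smul_eq_coe_smul (K := 𝕜)]
    exact N.smul_mem _ (hpN c)
  -- the key estimate
  have hkey : ∀ y : U, ‖g y - (y : F)‖ ≤ 3 * d y := by
    intro y
    have hsum1 : ∑ c ∈ ρ.finsupport y, ρ c y = 1 := ρ.sum_finsupport (mem_univ y)
    have hyeq : (y : F) = ∑ c ∈ ρ.finsupport y, ρ c y • (y : F) := by
      rw [← Finset.sum_smul, hsum1, one_smul]
    have : g y - (y : F) = ∑ c ∈ ρ.finsupport y, ρ c y • (p c - (y : F)) := by
      rw [hg_sum y,
        show (∑ c ∈ ρ.finsupport y, ρ c y • (p c - (y : F)))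
            = ∑ c ∈ ρ.finsupport y, (ρ c y • p c - ρ c y • (y : F)) from
          Finset.sum_congr rfl fun c _ => smul_sub _ _ _,
        Finset.sum_sub_distrib, ← Finset.sum_smul, hsum1, one_smul]
    rw [this]
    calc ‖∑ c ∈ ρ.finsupport y, ρ c y • (p c - (y : F))‖
        ≤ ∑ c ∈ ρ.finsupport y, ‖ρ c y • (p c - (y : F))‖ := norm_sum_le _ _
      _ ≤ ∑ c ∈ ρ.finsupport y, ρ c y * (3 * d y) := by
          refine Finset.sum_le_sum fun c hc => ?_
          rw [norm_smul, Real.norm_eq_abs, abs_of_nonneg (ρ.nonneg c y)]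
          refine mul_le_mul_of_nonneg_left ?_ (ρ.nonneg c y)
          -- y is in the support of ρ c, hence in W c
          have hyW : y ∈ W c := hρ c (subset_tsupport _ (by
            simpa using (ρ.mem_finsupport y).1 hc))
          have hdist : dist (y : F) (c : F) < d c / 4 := hyW
          have hdc : d c ≤ d y + dist (c : F) (y : F) := infDist_le_infDist_add_dist
          rw [dist_comm] at hdist
          have hdc' : d c ≤ (4 / 3) * d y := by linarith
          have h1 : ‖p c - (y : F)‖ = dist (p c) (y : F) := by
            rw [dist_eq_norm]
          rw [h1]
          calc dist (p c) (y : F) ≤ dist (p c) (c : F) + dist (c : F) (y : F) :=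
                dist_triangle _ _ _
            _ ≤ 2 * d c + d c / 4 := by
                rw [dist_comm (p c)]
                have := hpd c
                linarith
            _ ≤ 3 * d y := by linarith
      _ = 3 * d y := by rw [← Finset.sum_mul, hsum1, one_mul]
  -- the retraction
  refine ⟨fun x => if hx : x ∈ (N : Set F) then x else g ⟨x, hx⟩, ?_, ?_, ?_⟩
  · -- continuity
    set h : F → F := fun x => if hx : x ∈ (N : Set F) then x else g ⟨x, hx⟩ with hh_def
    have hbound : ∀ a ∈ (N : Set F), ∀ x : F, dist (h x) a ≤ 4 * dist x a := by
      intro a ha x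
      by_cases hx : x ∈ (N : Set F)
      · simp only [h, dif_pos hx]
        nlinarith [dist_nonneg (x := x) (y := a)]
      · simp only [h, dif_neg hx]
        have h1 : dist (g ⟨x, hx⟩) a ≤ ‖g ⟨x, hx⟩ - x‖ + dist x a := by
          rw [dist_eq_norm, dist_eq_norm]
          calc ‖g ⟨x, hx⟩ - a‖ = ‖(g ⟨x, hx⟩ - x) + (x - a)‖ := by
                rw [sub_add_sub_cancel]
            _ ≤ ‖g ⟨x, hx⟩ - x‖ + ‖x - a‖ := norm_add_le _ _
        have h2 : d x ≤ dist x a := infDist_le_dist_of_mem ha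
        have h3 := hkey ⟨x, hx⟩
        simp only at h3
        linarith
    rw [continuous_iff_continuousAt]
    intro x
    by_cases hx : x ∈ (N : Set F)
    · -- continuity at points of N from the Lipschitz-type bound
      have hhx : h x = x := dif_pos hx
      rw [ContinuousAt, tendsto_iff_dist_tendsto_zero]
      have hlim : Filter.Tendsto (fun y => 4 * dist y x) (nhds x) (nhds 0) := by
        have : Filter.Tendsto (fun y => dist y x) (nhds x) (nhds 0) :=
          tendsto_iff_dist_tendsto_zero.1 Filter.tendsto_id
        simpa using this.const_mul 4
      refine squeeze_zero (fun y => dist_nonneg) (fun y => ?_) hlim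
      rw [hhx]
      exact hbound x hx y
    · -- continuity on the open set U
      have hU_nhds : U ∈ nhds x := hUopen.mem_nhds hx
      refine ContinuousOn.continuousAt ?_ hU_nhds
      rw [continuousOn_iff_continuous_restrict]
      have : U.domRestrict h = g := funext fun y => dif_neg y.2
      rw [this]; exact hg_cont
  · intro ξ
    by_cases hx : ξ ∈ (N : Set F)
    · simp only [dif_pos hx]; exact hx
    · simp only [dif_neg hx]; exact hg_mem ⟨ξ, hx⟩
  · intro ξ hξ
    simp only [dif_pos (show ξ ∈ (N : Set F) from hξ)]
end

section
/- Let B and D be C*-algebras, let A be a closed *-subalgebra of B, and let J be a closed two-sided ideal in D. Let π : D → D/J be the quotient map, and let κ : C_b([1,∞), D/J) → C_b([1,∞), D/J)/C₀([1,∞), D/J) be the quotient map. Let φ : B → C_b([1,∞), D/J)/C₀([1,∞), D/J) be a *-homomorphism, and suppose there is a *-homomorphism ρ : A → D/J such that for every a ∈ A, φ(a) is the class of the constant function t ↦ ρ(a). Then there exists a family of functions L = (L_t)_{t∈[1,∞)} from B to D (not necessarily linear) such that: (1) (t, b) ↦ L_t(b) is jointly continuous; (2) the family (L_t) is equicontinuous,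 i.e. for every b ∈ B and ε > 0 there is δ > 0 such that ‖c − b‖ < δ implies ‖L_t(c) − L_t(b)‖ < ε for all t; (3) for every b ∈ B, the function t ↦ L_t(b) is bounded; (4) for every b ∈ B, the bounded continuous function t ↦ π(L_t(b)) in C_b([1,∞), D/J) is mapped by κ to φ(b); (5) for every a ∈ A, the function t ↦ L_t(a) is constant. -/
open Filter BoundedContinuousFunction



lemma approxSection {X Y : Type*} [NormedAddCommGroup X] [NormedSpace ℝ X]
    [NormedAddCommGroup Y] [NormedSpace ℝ Y]
    (T : X →L[ℝ] Y) {C : ℝ} (hT : ∀ y : Y, ∃ x, T x = y ∧ ‖x‖ ≤ C * ‖y‖)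
    (hC : 0 ≤ C) {ε : ℝ} (hε : 0 < ε) :
    ∃ g : Y → X, Continuous g ∧ ∀ y, ‖T (g y) - y‖ ≤ ε ∧ ‖g y‖ ≤ C * (‖y‖ + ε) := by
  choose x hx hxn using hT
  obtain ⟨p, hp⟩ := PartitionOfUnity.exists_isSubordinate (ι := Y) (X := Y)
    isClosed_univ (fun i => Metric.ball i ε) (fun i => Metric.isOpen_ball)
    (fun z _ => Set.mem_iUnion.2 ⟨z, Metric.mem_ball_self hε⟩)
  refine ⟨fun z => ∑ᶠ i, p i z • x i, ?_, fun z => ?_⟩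
  · exact p.continuous_finsum_smul (fun i x _ => continuousAt_const)
  · have hfin : {i : Y | z ∈ Function.support (⇑(p i))}.Finite :=
      p.locallyFinite.point_finite z
    set s : Finset Y := hfin.toFinset with hs
    have hmem : ∀ {i : Y}, p i z ≠ 0 → i ∈ s := by
      intro i hi
      simp [hs, Set.Finite.mem_toFinset, Function.mem_support, hi]
    have hball : ∀ i ∈ s, p i z ≠ 0 → dist z i < ε := by
      intro i _ hi
      have : z ∈ tsupport (⇑(p i)) := subset_tsupport _ hi
      exact hp i this
    have hsub1 : (Function.support fun i => p i z • x i) ⊆ ↑s := by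
      intro i hi
      exact hmem (fun h => hi (by simp [h]))
    have hsub2 : (Function.support fun i => (p i z : ℝ)) ⊆ ↑s := fun i hi => hmem hi
    have hsum1 : ∑ᶠ i, p i z • x i = ∑ i ∈ s, p i z • x i :=
      finsum_eq_sum_of_support_subset _ hsub1
    have hone : ∑ i ∈ s, p i z = 1 := by
      rw [← finsum_eq_sum_of_support_subset _ hsub2]
      exact p.sum_eq_one (Set.mem_univ z)
    constructor
    · have key : T (∑ i ∈ s, p i z • x i) - z = ∑ i ∈ s, p i z • (i - z) := by
        rw [map_sum]
        have hz : (z : Y) = ∑ i ∈ s, p i z • z := by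
          rw [← Finset.sum_smul, hone, one_smul]
        calc (∑ i ∈ s, T (p i z • x i)) - z
            = ∑ i ∈ s, (p i z • (i : Y) - p i z • z) := by
              rw [Finset.sum_sub_distrib, ← hz]
              exact congrArg₂ Sub.sub
                (Finset.sum_congr rfl fun i _ => by rw [map_smul, hx]) rfl
          _ = ∑ i ∈ s, p i z • ((i : Y) - z) := by
              refine Finset.sum_congr rfl fun i _ => ?_
              rw [smul_sub]
      show ‖T (∑ᶠ i, p i z • x i) - z‖ ≤ ε
      rw [hsum1, key]
      calc ‖∑ i ∈ s, p i z • ((i : Y) - z)‖ ≤ ∑ i ∈ s, ‖p i z • ((i : Y) - z)‖ :=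
            norm_sum_le _ _
        _ ≤ ∑ i ∈ s, p i z * ε := by
            refine Finset.sum_le_sum fun i hi => ?_
            rw [norm_smul, Real.norm_eq_abs, abs_of_nonneg (p.nonneg i z)]
            rcases eq_or_ne (p i z) 0 with h | h
            · simp [h]
            · have := hball i hi h
              refine mul_le_mul_of_nonneg_left ?_ (p.nonneg i z)
              rw [← dist_eq_norm, dist_comm]
              exact (this).le
        _ = ε := by rw [← Finset.sum_mul, hone, one_mul]
    · show ‖∑ᶠ i, p i z • x i‖ ≤ C * (‖z‖ + ε)
      rw [hsum1]
      calc ‖∑ i ∈ s, p i z • x i‖ ≤ ∑ i ∈ s, ‖p i z • x i‖ := norm_sum_le _ _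
        _ ≤ ∑ i ∈ s, p i z * (C * (‖z‖ + ε)) := by
            refine Finset.sum_le_sum fun i hi => ?_
            rw [norm_smul, Real.norm_eq_abs, abs_of_nonneg (p.nonneg i z)]
            rcases eq_or_ne (p i z) 0 with h | h
            · simp [h]
            · refine mul_le_mul_of_nonneg_left ((hxn i).trans ?_) (p.nonneg i z)
              refine mul_le_mul_of_nonneg_left ?_ hC
              have h2 : ‖(i : Y) - z‖ ≤ ε := by
                rw [← dist_eq_norm, dist_comm]
                exact (hball i hi h).le
              calc ‖(i : Y)‖ ≤ ‖z‖ + ‖(i : Y) - z‖ := by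
                    simpa using norm_add_le z ((i : Y) - z)
                _ ≤ ‖z‖ + ε := by linarith
        _ = C * (‖z‖ + ε) := by rw [← Finset.sum_mul, hone, one_mul]

lemma bartleGraves {X Y : Type*} [NormedAddCommGroup X] [NormedSpace ℝ X] [CompleteSpace X]
    [NormedAddCommGroup Y] [NormedSpace ℝ Y] [CompleteSpace Y]
    (T : X →L[ℝ] Y) (hT : Function.Surjective T) :
    ∃ s : Y → X, Continuous s ∧ (∀ y, T (s y) = y) ∧
      ∃ C : ℝ, 0 ≤ C ∧ ∀ y, ‖s y‖ ≤ C * ‖y‖ + C := by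
  obtain ⟨C, hCpos, hC⟩ := T.exists_preimage_norm_le hT
  have hC' : ∀ y : Y, ∃ x, T x = y ∧ ‖x‖ ≤ C * ‖y‖ := hC
  -- approximate sections at scales (2⁻¹)^n
  have hG : ∀ n : ℕ, ∃ g : Y → X, Continuous g ∧
      ∀ y, ‖T (g y) - y‖ ≤ (2⁻¹ : ℝ) ^ n ∧ ‖g y‖ ≤ C * (‖y‖ + (2⁻¹ : ℝ) ^ n) :=
    fun n => approxSection T hC' hCpos.le (by positivity)
  choose G hGc hGP using hG
  -- residuals
  let r : ℕ → Y → Y := fun n => Nat.rec (fun y => y)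
    (fun n rn => fun y => rn y - T (G n (rn y))) n
  have hr0 : ∀ y, r 0 y = y := fun _ => rfl
  have hrsucc : ∀ n y, r (n + 1) y = r n y - T (G n (r n y)) := fun _ _ => rfl
  have hrc : ∀ n, Continuous (r n) := by
    intro n
    induction n with
    | zero => exact continuous_id
    | succ n ih => exact ih.sub (T.continuous.comp ((hGc n).comp ih))
  have hrn : ∀ n y, ‖r (n + 1) y‖ ≤ (2⁻¹ : ℝ) ^ n := by
    intro n y
    rw [hrsucc]
    simpa [norm_sub_rev] using (hGP n (r n y)).1
  -- the terms of the series
  set t : ℕ → Y → X := fun n y => G n (r n y) with ht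
  have htc : ∀ n, Continuous (t n) := fun n => (hGc n).comp (hrc n)
  have htb : ∀ n y, ‖t (n + 1) y‖ ≤ 2 * C * (2⁻¹ : ℝ) ^ n := by
    intro n y
    refine le_trans (hGP (n + 1) (r (n + 1) y)).2 ?_
    have h1 : ‖r (n + 1) y‖ ≤ (2⁻¹ : ℝ) ^ n := hrn n y
    have h2 : ((2 : ℝ)⁻¹) ^ (n + 1) ≤ (2⁻¹ : ℝ) ^ n := by
      refine pow_le_pow_of_le_one (by norm_num) (by norm_num) (Nat.le_succ n)
    calc C * (‖r (n + 1) y‖ + (2⁻¹ : ℝ) ^ (n + 1))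
        ≤ C * ((2⁻¹ : ℝ) ^ n + (2⁻¹ : ℝ) ^ n) := by
          refine mul_le_mul_of_nonneg_left (add_le_add h1 h2) hCpos.le
      _ = 2 * C * (2⁻¹ : ℝ) ^ n := by ring
  have hu : Summable (fun n : ℕ => 2 * C * (2⁻¹ : ℝ) ^ n) :=
    (summable_geometric_of_lt_one (by norm_num) (by norm_num)).mul_left _
  have hsum : ∀ y, Summable (fun n => t (n + 1) y) := fun y =>
    Summable.of_norm (hu.of_nonneg_of_le (fun n => norm_nonneg _) (fun n => htb n y))
  -- the section
  refine ⟨fun y => t 0 y + ∑' n, t (n + 1) y, ?_, ?_, ?_⟩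
  · refine (htc 0).add ?_
    refine continuous_tsum (fun n => htc (n + 1)) hu (fun n y => htb n y)
  · intro y
    have hTsum : T (∑' n, t (n + 1) y) = ∑' n, T (t (n + 1) y) :=
      T.map_tsum (hsum y)
    have hTt : ∀ n, T (t n y) = r n y - r (n + 1) y := by
      intro n
      rw [hrsucc]; abel
    have htel : ∑' n, T (t (n + 1) y) = r 1 y := by
      have hs2 : Summable (fun n => T (t (n + 1) y)) := (hsum y).map T T.continuous
      have h1 : Filter.Tendsto (fun N => ∑ n ∈ Finset.range N, T (t (n + 1) y))
          Filter.atTop (nhds (∑' n, T (t (n + 1) y))) := hs2.hasSum.tendsto_sum_nat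
      have h2 : Filter.Tendsto (fun N => ∑ n ∈ Finset.range N, T (t (n + 1) y))
          Filter.atTop (nhds (r 1 y)) := by
        have hEq : ∀ N, ∑ n ∈ Finset.range N, T (t (n + 1) y) = r 1 y - r (N + 1) y := by
          intro N
          induction N with
          | zero => simp
          | succ N ih =>
            rw [Finset.sum_range_succ, ih, hTt]
            abel
        simp only [hEq]
        have : Filter.Tendsto (fun N : ℕ => r (N + 1) y) Filter.atTop (nhds 0) := by
          have hlim : Filter.Tendsto (fun N : ℕ => (2⁻¹ : ℝ) ^ N) Filter.atTop (nhds 0) :=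
            tendsto_pow_atTop_nhds_zero_of_lt_one (by norm_num) (by norm_num)
          exact squeeze_zero_norm (fun N => hrn N y) hlim
        simpa using (tendsto_const_nhds (x := r 1 y)).sub this
      exact tendsto_nhds_unique h1 h2
    rw [map_add, hTsum, htel, hTt 0, hr0]
    simp
  · refine ⟨C * 1 + C + 4 * C, by positivity, fun y => ?_⟩
    have h0 : ‖t 0 y‖ ≤ C * ‖y‖ + C := by
      have := (hGP 0 (r 0 y)).2
      rw [hr0] at this
      exact (by simpa [mul_add] using this : ‖G 0 y‖ ≤ C * ‖y‖ + C)
    have htail : ‖∑' n, t (n + 1) y‖ ≤ 4 * C := by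
      refine le_trans (norm_tsum_le_tsum_norm ?_) ?_
      · exact hu.of_nonneg_of_le (fun n => norm_nonneg _) (fun n => htb n y)
      · calc ∑' n, ‖t (n + 1) y‖ ≤ ∑' n : ℕ, 2 * C * (2⁻¹ : ℝ) ^ n := by
              refine Summable.tsum_le_tsum (fun n => htb n y) ?_ hu
              exact hu.of_nonneg_of_le (fun n => norm_nonneg _) (fun n => htb n y)
          _ = 2 * C * (1 - 2⁻¹)⁻¹ := by
              rw [tsum_mul_left, tsum_geometric_of_lt_one (by norm_num) (by norm_num)]
          _ = 4 * C := by
              rw [show ((1 : ℝ) - 2⁻¹)⁻¹ = 2 by norm_num]; ring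
    calc ‖t 0 y + ∑' n, t (n + 1) y‖ ≤ ‖t 0 y‖ + ‖∑' n, t (n + 1) y‖ := norm_add_le _ _
      _ ≤ (C * ‖y‖ + C) + 4 * C := add_le_add h0 htail
      _ ≤ (C * 1 + C + 4 * C) * ‖y‖ + (C * 1 + C + 4 * C) := by nlinarith [norm_nonneg y, hCpos.le]


lemma dugundji {X V : Type*} [MetricSpace X] [NormedAddCommGroup V] [NormedSpace ℝ V]
    {A : Set X} (hA : IsClosed A) (hAne : A.Nonempty) (f : A → V) (hf : Continuous f) :
    ∃ g : X → V, Continuous g ∧ ∀ a : A, g a = f a := by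
  classical
  set U : Set X := Aᶜ with hU
  have hUo : IsOpen U := hA.isOpen_compl
  -- radius function
  set r : ↥U → ℝ := fun z => Metric.infDist z.1 A with hrdef
  have hr : ∀ z : ↥U, 0 < r z := fun z =>
    (hA.notMem_iff_infDist_pos hAne).1 z.2
  -- the cover of U
  set Vs : ↥U → Set ↥U := fun i => {z : ↥U | dist z.1 i.1 < r i / 2} with hVs
  have hVo : ∀ i, IsOpen (Vs i) := by
    intro i
    have : Vs i = Subtype.val ⁻¹' Metric.ball i.1 (r i / 2) := rfl
    rw [this]
    exact Metric.isOpen_ball.preimage continuous_subtype_val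
  obtain ⟨p, hp⟩ := PartitionOfUnity.exists_isSubordinate (ι := ↥U) (X := ↥U)
    isClosed_univ Vs hVo
    (fun z _ => Set.mem_iUnion.2 ⟨z, by simp [hVs, half_pos (hr z)]⟩)
  -- nearby points of A
  have haux : ∀ i : ↥U, ∃ y ∈ A, dist i.1 y < 2 * r i := fun i =>
    (Metric.infDist_lt_iff hAne).1 (by linarith [hr i])
  choose a haA haD using haux
  set v : ↥U → V := fun i => f ⟨a i, haA i⟩ with hv
  set h : ↥U → V := fun z => ∑ᶠ i, p i z • v i with hh
  have hhc : Continuous h := p.continuous_finsum_smul (fun i x _ => continuousAt_const)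
  set g : X → V := fun x => if hx : x ∈ A then f ⟨x, hx⟩ else h ⟨x, hx⟩ with hg
  have hgA : ∀ a : A, g a = f a := by
    intro b
    simp only [hg, b.2, dif_pos, Subtype.coe_eta]
  refine ⟨g, ?_, hgA⟩
  rw [continuous_iff_continuousAt]
  intro x
  by_cases hxA : x ∈ A
  · -- continuity at points of A
    rw [Metric.continuousAt_iff]
    intro ε hε
    have hfc := hf.continuousAt (x := (⟨x, hxA⟩ : A))
    rw [Metric.continuousAt_iff] at hfc
    obtain ⟨δ₁, hδ₁, hδ⟩ := hfc (ε / 2) (by linarith)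
    refine ⟨δ₁ / 7, by linarith, fun {x'} hx' => ?_⟩
    have hgx : g x = f ⟨x, hxA⟩ := hgA ⟨x, hxA⟩
    by_cases hx'A : x' ∈ A
    · rw [hgx, hgA ⟨x', hx'A⟩]
      have : dist (⟨x', hx'A⟩ : A) (⟨x, hxA⟩ : A) < δ₁ := by
        rw [Subtype.dist_eq]; simpa using by linarith
      exact (hδ this).trans_le (by linarith)
    · -- the partition of unity estimate
      set z : ↥U := ⟨x', hx'A⟩ with hz
      have hgx' : g x' = h z := by simp only [hg, hx'A, dif_neg, not_false_iff]; rfl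
      rw [hgx, hgx', dist_eq_norm]
      -- finite support bookkeeping
      have hfin : {i : ↥U | z ∈ Function.support (⇑(p i))}.Finite :=
        p.locallyFinite.point_finite z
      set s : Finset ↥U := hfin.toFinset with hs
      have hmem : ∀ {i : ↥U}, p i z ≠ 0 → i ∈ s := by
        intro i hi
        simp [hs, Set.Finite.mem_toFinset, Function.mem_support, hi]
      have hsub1 : (Function.support fun i => p i z • v i) ⊆ ↑s :=
        fun i hi => hmem (fun hzero => hi (by simp [hzero]))
      have hsub2 : (Function.support fun i => (p i z : ℝ)) ⊆ ↑s := fun i hi => hmem hi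
      have hsum1 : h z = ∑ i ∈ s, p i z • v i :=
        finsum_eq_sum_of_support_subset _ hsub1
      have hone : ∑ i ∈ s, p i z = 1 := by
        rw [← finsum_eq_sum_of_support_subset _ hsub2]
        exact p.sum_eq_one (Set.mem_univ z)
      -- for each i in the support, a i is close to x
      have hclose : ∀ i : ↥U, p i z ≠ 0 → dist (a i) x < δ₁ := by
        intro i hi
        have hzV : z ∈ Vs i := hp i (subset_tsupport _ hi)
        have h1 : dist x' i.1 < r i / 2 := hzV
        have h2 : r i ≤ dist i.1 x := Metric.infDist_le_dist_of_mem hxA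
        have h3 : dist i.1 x ≤ dist i.1 x' + dist x' x := dist_triangle _ _ _
        have h4 : dist i.1 x' = dist x' i.1 := dist_comm _ _
        have h5 : r i < 2 * (δ₁ / 7) := by linarith
        have h6 : dist (a i) x ≤ dist (a i) i.1 + dist i.1 x' + dist x' x :=
          dist_triangle4 _ _ _ _
        have h7 : dist (a i) i.1 < 2 * r i := by
          rw [dist_comm]; exact haD i
        linarith
      have key : h z - f ⟨x, hxA⟩ = ∑ i ∈ s, p i z • (v i - f ⟨x, hxA⟩) := by
        rw [hsum1]
        have hx1 : f ⟨x, hxA⟩ = ∑ i ∈ s, p i z • f ⟨x, hxA⟩ := by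
          rw [← Finset.sum_smul, hone, one_smul]
        calc ∑ i ∈ s, p i z • v i - f ⟨x, hxA⟩
            = ∑ i ∈ s, p i z • v i - ∑ i ∈ s, p i z • f ⟨x, hxA⟩ := by rw [← hx1]
          _ = ∑ i ∈ s, (p i z • v i - p i z • f ⟨x, hxA⟩) := by
              rw [Finset.sum_sub_distrib]
          _ = ∑ i ∈ s, p i z • (v i - f ⟨x, hxA⟩) :=
              Finset.sum_congr rfl fun i _ => (smul_sub _ _ _).symm
      rw [key]
      calc ‖∑ i ∈ s, p i z • (v i - f ⟨x, hxA⟩)‖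
          ≤ ∑ i ∈ s, ‖p i z • (v i - f ⟨x, hxA⟩)‖ := norm_sum_le _ _
        _ ≤ ∑ i ∈ s, p i z * (ε / 2) := by
            refine Finset.sum_le_sum fun i hi => ?_
            rw [norm_smul, Real.norm_eq_abs, abs_of_nonneg (p.nonneg i z)]
            rcases eq_or_ne (p i z) 0 with hzero | hzero
            · simp [hzero]
            · refine mul_le_mul_of_nonneg_left ?_ (p.nonneg i z)
              have : dist (⟨a i, haA i⟩ : A) (⟨x, hxA⟩ : A) < δ₁ := by
                rw [Subtype.dist_eq]; exact hclose i hzero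
              have := hδ this
              rw [dist_eq_norm] at this
              exact this.le
        _ = ε / 2 := by rw [← Finset.sum_mul, hone, one_mul]
        _ < ε := by linarith
  · -- continuity on the open set U
    have hrestrict : Continuous (U.restrict g) := by
      have : U.restrict g = h := by
        funext z
        simp only [Set.restrict_apply, hg]
        exact dif_neg z.2
      rw [this]
      exact hhc
    have hUc : ContinuousOn g U := continuousOn_iff_continuous_restrict.2 hrestrict
    exact hUc.continuousAt (hUo.mem_nhds hxA)


/-- Relative lifting of a homomorphism into an asymptotic algebra to an equicontinuous
family of set-theoretic lifts (Lemma 1.3 of the paper).  Here `θ : D → D/J` is the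
quotient map by a closed two-sided ideal `J` (represented as a surjective
⋆-homomorphism onto a C*-algebra `DJ` with kernel `J`), and
`κ : C_b([1,∞), D/J) → C_b([1,∞), D/J)/C₀([1,∞), D/J)` is the quotient map onto the
asymptotic algebra (represented as a surjective ⋆-homomorphism onto a C*-algebra `QDJ`
whose kernel is the functions vanishing at infinity). -/
theorem exists_equicontinuous_relative_lift
    {B D DJ QDJ : Type*}
    [NonUnitalCStarAlgebra B] [NonUnitalCStarAlgebra D] [NonUnitalCStarAlgebra DJ]
    [NonUnitalCStarAlgebra QDJ]
    (A : NonUnitalStarSubalgebra ℂ B) (hA : IsClosed (A : Set B))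
    (J : TwoSidedIdeal D) (hJ : IsClosed (J : Set D))
    (θ : D →⋆ₙₐ[ℂ] DJ) (hθ : Function.Surjective θ)
    (hkerθ : ∀ d : D, θ d = 0 ↔ d ∈ J)
    (κ : BoundedContinuousFunction (Set.Ici (1 : ℝ)) DJ →⋆ₙₐ[ℂ] QDJ)
    (hκ : Function.Surjective κ)
    (hkerκ : ∀ f : BoundedContinuousFunction (Set.Ici (1 : ℝ)) DJ,
      κ f = 0 ↔ Tendsto (fun t : Set.Ici (1 : ℝ) => ‖f t‖) atTop (nhds 0))
    (φ : B →⋆ₙₐ[ℂ] QDJ) (ρ : A →⋆ₙₐ[ℂ] DJ)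
    (hρ : ∀ a : A, φ (a : B) = κ (const _ (ρ a))) :
    ∃ L : Set.Ici (1 : ℝ) → B → D,
      -- (1) joint continuity
      Continuous (fun z : Set.Ici (1 : ℝ) × B => L z.1 z.2) ∧
      -- (2) equicontinuity
      (∀ b : B, ∀ ε > (0 : ℝ), ∃ δ > (0 : ℝ), ∀ c : B, ‖c - b‖ < δ →
        ∀ t : Set.Ici (1 : ℝ), ‖L t c - L t b‖ < ε) ∧
      -- (3) boundedness in `t`
      (∀ b : B, ∃ C : ℝ, ∀ t : Set.Ici (1 : ℝ), ‖L t b‖ ≤ C) ∧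
      -- (4) `t ↦ θ (L t b)` is a bounded continuous lift of `φ b`
      (∀ b : B, ∃ y : BoundedContinuousFunction (Set.Ici (1 : ℝ)) DJ,
        (∀ t : Set.Ici (1 : ℝ), y t = θ (L t b)) ∧ κ y = φ b) ∧
      -- (5) `t ↦ L t a` is constant for `a ∈ A`
      (∀ a : A, ∀ t t' : Set.Ici (1 : ℝ), L t (a : B) = L t' (a : B)) := by
  classical
  -- `A` is a C⋆-algebra
  haveI hAcomp : CompleteSpace A := hA.completeSpace_coe
  letI : NonUnitalCStarAlgebra A := { hAcomp with }
  -- `θ` as a continuous `ℝ`-linear map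
  let θL : D →L[ℝ] DJ :=
    LinearMap.mkContinuous
      { toFun := fun d => θ d
        map_add' := fun x y => map_add θ x y
        map_smul' := fun c x => map_smul θ c x }
      1 (fun d => by simpa using NonUnitalStarAlgHom.norm_apply_le θ d)
      |>.restrictScalars ℝ
  have hθL : ∀ d : D, θL d = θ d := fun _ => rfl
  -- `κ` as a continuous `ℝ`-linear map
  let κL : BoundedContinuousFunction (Set.Ici (1 : ℝ)) DJ →L[ℝ] QDJ :=
    LinearMap.mkContinuous
      { toFun := fun f => κ f
        map_add' := fun x y => map_add κ x y
        map_smul' := fun c x => map_smul κ c x }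
      1 (fun f => by simpa using NonUnitalStarAlgHom.norm_apply_le κ f)
      |>.restrictScalars ℝ
  have hκL : ∀ f, κL f = κ f := fun _ => rfl
  -- the postcomposition operator
  let Θ : BoundedContinuousFunction (Set.Ici (1 : ℝ)) D →L[ℝ]
      BoundedContinuousFunction (Set.Ici (1 : ℝ)) DJ :=
    θL.compLeftContinuousBounded (Set.Ici (1 : ℝ))
  have hΘ : ∀ (f : BoundedContinuousFunction (Set.Ici (1 : ℝ)) D) (t : Set.Ici (1 : ℝ)),
      Θ f t = θ (f t) := fun f t => rfl
  let K : BoundedContinuousFunction (Set.Ici (1 : ℝ)) D →L[ℝ] QDJ := κL.comp Θ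
  have hK : ∀ f, K f = κ (Θ f) := fun _ => rfl
  -- Bartle–Graves section of `θ`
  obtain ⟨sθ, hsθc, hsθ, Cθ, hCθ0, hCθ⟩ := bartleGraves θL hθ
  -- `K` is surjective
  have hKsurj : Function.Surjective K := by
    intro q
    obtain ⟨g, hg⟩ := hκ q
    have hbound : ∀ t : Set.Ici (1 : ℝ), ‖sθ (g t)‖ ≤ Cθ * ‖g‖ + Cθ := by
      intro t
      refine (hCθ (g t)).trans ?_
      have := g.norm_coe_le_norm t
      nlinarith
    refine ⟨BoundedContinuousFunction.ofNormedAddCommGroup (fun t => sθ (g t))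
      (hsθc.comp g.continuous) (Cθ * ‖g‖ + Cθ) hbound, ?_⟩
    rw [hK]
    have hΘg : Θ (BoundedContinuousFunction.ofNormedAddCommGroup (fun t => sθ (g t))
        (hsθc.comp g.continuous) (Cθ * ‖g‖ + Cθ) hbound) = g := by
      ext t
      rw [hΘ]
      simp only [BoundedContinuousFunction.coe_ofNormedAddCommGroup]
      rw [← hθL, hsθ (g t)]
    rw [hΘg, hg]
  -- Bartle–Graves section of `K`, normalized to vanish at `0`
  obtain ⟨S₀, hS₀c, hS₀, _, _, _⟩ := bartleGraves K hKsurj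
  set S : QDJ → BoundedContinuousFunction (Set.Ici (1 : ℝ)) D := fun q => S₀ q - S₀ 0 with hSdef
  have hSc : Continuous S := hS₀c.sub continuous_const
  have hS : ∀ q, K (S q) = q := by
    intro q
    rw [hSdef]
    simp only [map_sub, hS₀]
    simp
  have hS0 : S 0 = 0 := by simp [hSdef]
  -- `ρ` is continuous
  have hρcont : Continuous (⇑ρ : A → DJ) :=
    AddMonoidHomClass.continuous_of_bound ρ 1
      (fun a => by simpa using NonUnitalStarAlgHom.norm_apply_le ρ a)
  -- `const` is Lipschitz
  have hconstLip : LipschitzWith 1 (BoundedContinuousFunction.const (Set.Ici (1 : ℝ)) : D →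
      BoundedContinuousFunction (Set.Ici (1 : ℝ)) D) := by
    refine LipschitzWith.of_dist_le_mul (fun x y => ?_)
    simp only [NNReal.coe_one, one_mul]
    exact (BoundedContinuousFunction.dist_le dist_nonneg).2 (fun t => le_rfl)
  -- extend `a ↦ const (sθ (ρ a))` from `A` to `B` à la Dugundji
  have hAne : (A : Set B).Nonempty := ⟨0, by simpa using zero_mem A⟩
  have hfc : Continuous (fun a : (A : Set B) =>
      BoundedContinuousFunction.const (Set.Ici (1 : ℝ)) (sθ (ρ ⟨a.1, a.2⟩))) := by
    refine hconstLip.continuous.comp (hsθc.comp (hρcont.comp ?_))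
    exact Continuous.subtype_mk continuous_subtype_val _
  obtain ⟨ce, hcec, hceA⟩ := dugundji hA hAne _ hfc
  -- `φ` is continuous
  have hφcont : Continuous (⇑φ : B → QDJ) :=
    AddMonoidHomClass.continuous_of_bound φ 1
      (fun b => by simpa using NonUnitalStarAlgHom.norm_apply_le φ b)
  -- the main construction
  set M : B → BoundedContinuousFunction (Set.Ici (1 : ℝ)) D :=
    fun b => ce b + S (φ b - K (ce b)) with hMdef
  have hMc : Continuous M :=
    hcec.add (hSc.comp (hφcont.sub (K.continuous.comp hcec)))
  have hKM : ∀ b, K (M b) = φ b := by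
    intro b
    rw [hMdef]
    simp only [map_add, hS]
    abel
  -- on `A`, `M` is the constant function
  have hMA : ∀ a : A, M (a : B) = BoundedContinuousFunction.const (Set.Ici (1 : ℝ)) (sθ (ρ a)) := by
    intro a
    have hmem : (a : B) ∈ (A : Set B) := a.2
    have hce : ce (a : B) = BoundedContinuousFunction.const (Set.Ici (1 : ℝ)) (sθ (ρ a)) := by
      have := hceA ⟨(a : B), hmem⟩
      simpa using this
    have hKce : K (ce (a : B)) = φ (a : B) := by
      rw [hce, hK]
      have hΘconst : Θ (BoundedContinuousFunction.const (Set.Ici (1 : ℝ)) (sθ (ρ a))) =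
          BoundedContinuousFunction.const (Set.Ici (1 : ℝ)) (ρ a) := by
        ext t
        rw [hΘ]
        simp only [BoundedContinuousFunction.const_apply]
        rw [← hθL, hsθ (ρ a)]
      rw [hΘconst, ← hρ a]
    rw [hMdef]
    simp only [hKce, sub_self, hS0, add_zero]
    exact hce
  refine ⟨fun t b => M b t, ?_, ?_, ?_, ?_, ?_⟩
  · -- (1) joint continuity
    have : Continuous (fun z : Set.Ici (1 : ℝ) × B =>
        ((M z.2, z.1) : BoundedContinuousFunction (Set.Ici (1 : ℝ)) D × Set.Ici (1 : ℝ))) :=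
      (hMc.comp continuous_snd).prodMk continuous_fst
    exact continuous_eval.comp this
  · -- (2) equicontinuity
    intro b ε hε
    have := hMc.continuousAt (x := b)
    rw [Metric.continuousAt_iff] at this
    obtain ⟨δ, hδ0, hδ⟩ := this ε hε
    refine ⟨δ, hδ0, fun c hc t => ?_⟩
    have h1 : dist c b < δ := by rwa [dist_eq_norm]
    have h2 : dist (M c) (M b) < ε := hδ h1
    calc ‖M c t - M b t‖ = dist (M c t) (M b t) := (dist_eq_norm _ _).symm
      _ ≤ dist (M c) (M b) := BoundedContinuousFunction.dist_coe_le_dist t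
      _ < ε := h2
  · -- (3) boundedness
    exact fun b => ⟨‖M b‖, fun t => (M b).norm_coe_le_norm t⟩
  · -- (4) the bounded continuous lift
    intro b
    refine ⟨Θ (M b), fun t => hΘ (M b) t, ?_⟩
    rw [← hK, hKM]
  · -- (5) constancy on `A`
    intro a t t'
    show M (a : B) t = M (a : B) t'
    rw [hMA a]
    rfl
end

section
/- Let S be the unilateral shift on ℓ²(ℕ) (the isometry sending the n-th standard basis vector to the (n+1)-st), and let π : B(ℓ²(ℕ)) → Q be the quotient map onto the Calkin algebra. Then there is no element y ∈ Q with y² = π(S). -/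
open Module Submodule LinearMap

variable {𝕜 V : Type*} [Field 𝕜] [AddCommGroup V] [Module 𝕜 V]

/-- Algebraic Fredholm index. -/
noncomputable def lind (f : V →ₗ[𝕜] V) : ℤ :=
  (Module.finrank 𝕜 (LinearMap.ker f) : ℤ) - Module.finrank 𝕜 (V ⧸ LinearMap.range f)

structure LFred (f : V →ₗ[𝕜] V) : Prop where
  fk : FiniteDimensional 𝕜 (LinearMap.ker f)
  fc : FiniteDimensional 𝕜 (V ⧸ LinearMap.range f)

lemma fd_of_submodule_quotient (p : Submodule 𝕜 V) (h1 : FiniteDimensional 𝕜 p)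
    (h2 : FiniteDimensional 𝕜 (V ⧸ p)) : FiniteDimensional 𝕜 V := by
  rw [FiniteDimensional, Module.finite_def]
  apply Submodule.fg_of_fg_map_of_fg_inf_ker p.mkQ (s := ⊤)
  · rw [Submodule.map_top, Submodule.range_mkQ]
    exact Module.finite_def.mp h2
  · rw [Submodule.ker_mkQ, top_inf_eq]
    exact Module.Finite.iff_fg.mp h1

lemma fd_of_fd_ker_range {W : Type*} [AddCommGroup W] [Module 𝕜 W] (f : V →ₗ[𝕜] W)
    (h1 : FiniteDimensional 𝕜 (LinearMap.ker f)) (h2 : FiniteDimensional 𝕜 (LinearMap.range f)) :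
    FiniteDimensional 𝕜 V := by
  have e := f.quotKerEquivRange
  exact fd_of_submodule_quotient (LinearMap.ker f) h1 (Module.Finite.equiv e.symm)

lemma LFred.comp {f g : V →ₗ[𝕜] V} (hf : LFred f) (hg : LFred g) :
    LFred (f ∘ₗ g) ∧ lind (f ∘ₗ g) = lind f + lind g := by
  classical
  obtain ⟨hfk, hfc⟩ := hf
  obtain ⟨hgk, hgc⟩ := hg
  set Kf := LinearMap.ker f with hKf
  set Kg := LinearMap.ker g with hKg
  set Rf := LinearMap.range f with hRf
  set Rg := LinearMap.range g with hRg
  set R := LinearMap.range (f ∘ₗ g) with hR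
  -- the map ψ : ker (f∘g) → V, x ↦ g x
  set ψ : LinearMap.ker (f ∘ₗ g) →ₗ[𝕜] V := g.domRestrict (LinearMap.ker (f ∘ₗ g)) with hψ
  have hle : Kg ≤ LinearMap.ker (f ∘ₗ g) := by
    intro x hx
    simp only [LinearMap.mem_ker, LinearMap.comp_apply] at *
    rw [hx, map_zero]
  have hkerψ : LinearMap.ker ψ = Submodule.comap (LinearMap.ker (f ∘ₗ g)).subtype Kg := by
    ext x; simp [hψ, hKg, LinearMap.mem_ker]
  have ekerψ : (LinearMap.ker ψ) ≃ₗ[𝕜] Kg := by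
    rw [hkerψ]; exact Submodule.comapSubtypeEquivOfLe hle
  have hranψ : LinearMap.range ψ = Kf ⊓ Rg := by
    ext y
    constructor
    · rintro ⟨⟨x, hx⟩, rfl⟩
      refine ⟨?_, ⟨x, rfl⟩⟩
      show f (g x) = 0
      simpa only [LinearMap.mem_ker, LinearMap.comp_apply] using hx
    · rintro ⟨hy1, ⟨x, rfl⟩⟩
      exact ⟨⟨x, by exact hy1⟩, rfl⟩
  have fdinf : FiniteDimensional 𝕜 ↥(Kf ⊓ Rg) := Submodule.finiteDimensional_of_le inf_le_left
  have fdkfg : FiniteDimensional 𝕜 (LinearMap.ker (f ∘ₗ g)) := by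
    apply fd_of_fd_ker_range ψ
    · exact Module.Finite.equiv ekerψ.symm
    · rw [hranψ]; exact fdinf
  -- EQ1
  have EQ1 : finrank 𝕜 ↥(Kf ⊓ Rg) + finrank 𝕜 Kg = finrank 𝕜 (LinearMap.ker (f ∘ₗ g)) := by
    rw [← ekerψ.finrank_eq, ← hranψ]
    exact LinearMap.finrank_range_add_finrank_ker ψ
  -- the map χ : Kf → V ⧸ Rg
  set χ : Kf →ₗ[𝕜] (V ⧸ Rg) := Rg.mkQ.domRestrict Kf with hχ
  have hkerχ : LinearMap.ker χ = Submodule.comap Kf.subtype (Kf ⊓ Rg) := by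
    ext x
    simp [hχ, LinearMap.mem_ker, Submodule.Quotient.mk_eq_zero, x.2]
  have ekerχ : (LinearMap.ker χ) ≃ₗ[𝕜] ↥(Kf ⊓ Rg) := by
    rw [hkerχ]; exact Submodule.comapSubtypeEquivOfLe inf_le_left
  have hranχ : LinearMap.range χ = Kf.map Rg.mkQ := by
    ext y
    constructor
    · rintro ⟨⟨x, hx⟩, rfl⟩; exact ⟨x, hx, rfl⟩
    · rintro ⟨x, hx, rfl⟩; exact ⟨⟨x, hx⟩, rfl⟩
  have EQ3 : finrank 𝕜 (LinearMap.range χ) + finrank 𝕜 ↥(Kf ⊓ Rg) = finrank 𝕜 Kf := by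
    rw [← ekerχ.finrank_eq]
    exact LinearMap.finrank_range_add_finrank_ker χ
  -- the map ψ₂ : V ⧸ Rg → V ⧸ R
  have hmap : Rg ≤ Submodule.comap f R := by
    rintro x ⟨z, rfl⟩
    exact ⟨z, rfl⟩
  set ψ₂ : (V ⧸ Rg) →ₗ[𝕜] (V ⧸ R) := Submodule.mapQ Rg R f hmap with hψ₂
  have hkerψ₂ : LinearMap.ker ψ₂ = Kf.map Rg.mkQ := by
    ext y
    constructor
    · intro hy
      obtain ⟨x, rfl⟩ := Rg.mkQ_surjective y
      rw [LinearMap.mem_ker, hψ₂, Submodule.mkQ_apply, Submodule.mapQ_apply,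
        Submodule.Quotient.mk_eq_zero] at hy
      obtain ⟨z, hz⟩ := hy
      refine ⟨x - g z, ?_, ?_⟩
      · show x - g z ∈ Kf
        rw [hKf, LinearMap.mem_ker, map_sub, ← hz]
        simp [LinearMap.comp_apply]
      · rw [Submodule.mkQ_apply, Submodule.mkQ_apply, Submodule.Quotient.eq]
        rw [sub_sub_cancel_left]
        exact Submodule.neg_mem _ ⟨z, rfl⟩
    · rintro ⟨x, hx, rfl⟩
      rw [LinearMap.mem_ker, hψ₂, Submodule.mkQ_apply, Submodule.mapQ_apply,
        Submodule.Quotient.mk_eq_zero]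
      have hx' : f x = 0 := hx
      rw [hx']
      exact Submodule.zero_mem _
  have hranψ₂ : LinearMap.range ψ₂ = Rf.map R.mkQ := by
    ext y
    constructor
    · rintro ⟨x, rfl⟩
      obtain ⟨x', rfl⟩ := Rg.mkQ_surjective x
      exact ⟨f x', ⟨x', rfl⟩, rfl⟩
    · rintro ⟨z, ⟨x, rfl⟩, rfl⟩
      exact ⟨Submodule.Quotient.mk x, rfl⟩
  have fdranψ₂ : FiniteDimensional 𝕜 (LinearMap.range ψ₂) := inferInstance
  have EQ2 : finrank 𝕜 (LinearMap.range ψ₂) + finrank 𝕜 (LinearMap.ker ψ₂) =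
      finrank 𝕜 (V ⧸ Rg) := LinearMap.finrank_range_add_finrank_ker ψ₂
  -- the quotient tower
  have hRle : R ≤ Rf := by
    rintro y ⟨x, rfl⟩; exact ⟨g x, rfl⟩
  have etower : ((V ⧸ R) ⧸ (Rf.map R.mkQ)) ≃ₗ[𝕜] V ⧸ Rf :=
    Submodule.quotientQuotientEquivQuotient R Rf hRle
  have fdN : FiniteDimensional 𝕜 ↥(Rf.map R.mkQ) := by rw [← hranψ₂]; exact fdranψ₂
  have fdcfg : FiniteDimensional 𝕜 (V ⧸ R) := by
    apply fd_of_submodule_quotient (Rf.map R.mkQ) fdN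
    exact Module.Finite.equiv etower.symm
  have EQ4 : finrank 𝕜 (V ⧸ Rf) + finrank 𝕜 ↥(Rf.map R.mkQ) = finrank 𝕜 (V ⧸ R) := by
    rw [← etower.finrank_eq]
    exact Submodule.finrank_quotient_add_finrank (Rf.map R.mkQ)
  refine ⟨⟨fdkfg, fdcfg⟩, ?_⟩
  -- now the arithmetic
  have hnr : finrank 𝕜 (LinearMap.ker ψ₂) = finrank 𝕜 (LinearMap.range χ) := by
    rw [hkerψ₂, ← hranχ]
  rw [hkerψ₂, ← hranχ] at EQ2
  rw [hranψ₂] at EQ2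
  unfold lind
  rw [← EQ1, ← EQ4, ← EQ2, ← EQ3]
  push_cast
  ring

lemma LFred.of_bijective {f : V →ₗ[𝕜] V} (hf : Function.Bijective f) :
    LFred f ∧ lind f = 0 := by
  have hk : LinearMap.ker f = ⊥ := LinearMap.ker_eq_bot.mpr hf.1
  have hr : LinearMap.range f = ⊤ := LinearMap.range_eq_top.mpr hf.2
  have hss : Subsingleton (V ⧸ LinearMap.range f) := by
    rw [hr]
    exact Submodule.Quotient.subsingleton_iff.mpr rfl
  constructor
  · constructor
    · rw [hk]; infer_instance
    · exact Module.Finite.of_finite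
  · unfold lind
    rw [hk, finrank_bot, Module.finrank_zero_of_subsingleton]
    simp

lemma lind_one_add_finiteRank (f : V →ₗ[𝕜] V)
    (hfr : FiniteDimensional 𝕜 (LinearMap.range f)) :
    LFred (LinearMap.id + f) ∧ lind (LinearMap.id + f) = 0 := by
  classical
  set T : V →ₗ[𝕜] V := LinearMap.id + f with hT
  set W : Submodule 𝕜 V := LinearMap.range f with hW
  have hTx : ∀ x, T x = x + f x := fun x => rfl
  have hTW : ∀ x : V, x ∈ W → T x ∈ W := by
    intro x hx
    rw [hTx]
    exact W.add_mem hx ⟨x, rfl⟩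
  have hkerle : LinearMap.ker T ≤ W := by
    intro x hx
    rw [LinearMap.mem_ker, hTx] at hx
    have : x = -f x := by linear_combination (norm := abel) hx
    rw [this]
    exact W.neg_mem ⟨x, rfl⟩
  set TW : W →ₗ[𝕜] W := T.restrict hTW with hTWdef
  -- kernel equivalence
  have hkerTW : LinearMap.ker TW = (LinearMap.ker T).comap W.subtype :=
    LinearMap.ker_restrict hTW
  have ekerTW : (LinearMap.ker TW) ≃ₗ[𝕜] LinearMap.ker T := by
    rw [hkerTW]; exact Submodule.comapSubtypeEquivOfLe hkerle
  -- range of TW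
  have hranTW : (LinearMap.range TW).map W.subtype = W ⊓ LinearMap.range T := by
    ext y
    constructor
    · rintro ⟨⟨w, hw⟩, ⟨⟨x, hx⟩, hTx2⟩, rfl⟩
      have hvw : T x = w := congrArg Subtype.val hTx2
      exact ⟨hw, ⟨x, hvw⟩⟩
    · rintro ⟨hy, ⟨x, rfl⟩⟩
      have hxW : x ∈ W := by
        have : x = T x - f x := by rw [hTx]; abel
        rw [this]
        exact W.sub_mem hy ⟨x, rfl⟩
      exact ⟨⟨T x, hTW x hxW⟩, ⟨⟨x, hxW⟩, rfl⟩, rfl⟩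
  -- the map to the cokernel
  set χ : W →ₗ[𝕜] (V ⧸ LinearMap.range T) := (LinearMap.range T).mkQ.domRestrict W with hχ
  have hχsurj : Function.Surjective χ := by
    intro y
    obtain ⟨x, rfl⟩ := (LinearMap.range T).mkQ_surjective y
    refine ⟨⟨-f x, W.neg_mem ⟨x, rfl⟩⟩, ?_⟩
    show (LinearMap.range T).mkQ (-f x) = (LinearMap.range T).mkQ x
    rw [Submodule.mkQ_apply, Submodule.mkQ_apply, Submodule.Quotient.eq]
    refine ⟨-x, ?_⟩
    rw [map_neg, hTx]; abel
  have fdcoker : FiniteDimensional 𝕜 (V ⧸ LinearMap.range T) :=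
    Module.Finite.of_surjective χ hχsurj
  have fdker : FiniteDimensional 𝕜 (LinearMap.ker T) :=
    Submodule.finiteDimensional_of_le hkerle
  -- kernel of χ
  have hkerχ : LinearMap.ker χ = LinearMap.range TW := by
    have h1 : LinearMap.ker χ = (LinearMap.range T).comap W.subtype := by
      ext x
      simp [hχ, LinearMap.mem_ker, Submodule.Quotient.mk_eq_zero]
    rw [h1]
    have h2 : (LinearMap.range T).comap W.subtype
        = (W ⊓ LinearMap.range T).comap W.subtype := by
      ext x
      simp [x.2]
    rw [h2, ← hranTW, Submodule.comap_map_eq, Submodule.ker_subtype, sup_bot_eq]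
  -- rank-nullity computations
  have RN1 : finrank 𝕜 (LinearMap.range TW) + finrank 𝕜 (LinearMap.ker TW) = finrank 𝕜 W :=
    LinearMap.finrank_range_add_finrank_ker TW
  have RN2 : finrank 𝕜 (LinearMap.range χ) + finrank 𝕜 (LinearMap.ker χ) = finrank 𝕜 W :=
    LinearMap.finrank_range_add_finrank_ker χ
  have hranχ : LinearMap.range χ = ⊤ := LinearMap.range_eq_top.mpr hχsurj
  rw [hranχ, hkerχ] at RN2
  rw [finrank_top] at RN2
  refine ⟨⟨fdker, fdcoker⟩, ?_⟩
  unfold lind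
  rw [← ekerTW.finrank_eq]
  omega

set_option maxHeartbeats 1000000

open Module Submodule LinearMap

noncomputable section

local notation "H" => lp (fun _ : ℕ => ℂ) 2

abbrev eb (n : ℕ) : lp (fun _ : ℕ => ℂ) 2 := lp.single 2 n 1

open scoped InnerProductSpace ComplexConjugate

lemma inner_eb_eb (n m : ℕ) : ⟪eb n, eb m⟫_ℂ = if n = m then 1 else 0 := by
  rw [lp.inner_single_left]
  simp only [RCLike.inner_apply, map_one, one_mul]
  rw [lp.single_apply]
  simp only [eq_comm]
  norm_num
  simp [Pi.single_apply]

lemma dense_span_eb : Dense ((Submodule.span ℂ (Set.range eb) : Submodule ℂ H) : Set H) := by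
  intro x
  have hsum : HasSum (fun i : ℕ => lp.single 2 i (x i)) x := lp.hasSum_single (by norm_num) x
  have := hsum.tendsto_sum_nat
  refine mem_closure_of_tendsto this ?_
  filter_upwards with s
  refine Submodule.sum_mem _ fun i _ => ?_
  have : lp.single 2 i (x i) = (x i) • eb i := by
    rw [← lp.single_smul]
    norm_num
  rw [this]
  exact Submodule.smul_mem _ _ (Submodule.subset_span ⟨i, rfl⟩)

/-- Extensionality on the standard basis for continuous linear maps. -/
lemma clm_ext_eb {F : Type*} [NormedAddCommGroup F] [NormedSpace ℂ F]
    {f g : H →L[ℂ] F} (h : ∀ n, f (eb n) = g (eb n)) : f = g := by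
  refine ContinuousLinearMap.ext_on dense_span_eb ?_
  rintro x ⟨n, rfl⟩
  exact h n

lemma vec_ext_eb {x : H} (h : ∀ n, ⟪eb n, x⟫_ℂ = 0) : x = 0 := by
  have h2 : innerSL ℂ x = (0 : H →L[ℂ] ℂ) := by
    apply clm_ext_eb
    intro n
    simp only [innerSL_apply_apply, ContinuousLinearMap.zero_apply]
    rw [← inner_conj_symm]
    rw [h n]
    simp
  have := congrArg (fun f => f x) h2
  simp only [innerSL_apply_apply, ContinuousLinearMap.zero_apply] at this
  exact inner_self_eq_zero.mp this

section Shift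

variable (S : H →L[ℂ] H) (hS : ∀ n : ℕ, S (eb n) = eb (n + 1))

include hS

lemma shift_inner (x y : H) : ⟪S x, S y⟫_ℂ = ⟪x, y⟫_ℂ := by
  have step1 : ∀ (m : ℕ) (z : H), ⟪S (eb m), S z⟫_ℂ = ⟪eb m, z⟫_ℂ := by
    intro m z
    have : (innerSL ℂ (S (eb m))).comp S = innerSL ℂ (eb m) := by
      apply clm_ext_eb
      intro n
      simp only [ContinuousLinearMap.comp_apply, innerSL_apply_apply]
      rw [hS, hS, inner_eb_eb, inner_eb_eb]
      simp
    exact congrArg (fun f => f z) this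
  have step2 : ∀ (z w : H), ⟪S z, S w⟫_ℂ = ⟪z, w⟫_ℂ := by
    intro z w
    have : (innerSL ℂ (S z)).comp S = innerSL ℂ z := by
      apply clm_ext_eb
      intro n
      simp only [ContinuousLinearMap.comp_apply, innerSL_apply_apply]
      rw [← inner_conj_symm, step1 n z, inner_conj_symm]
    exact congrArg (fun f => f w) this
  exact step2 x y

/-- The adjoint of the shift. -/
lemma shift_adjoint_comp : (ContinuousLinearMap.adjoint S).comp S = 1 := by
  refine ContinuousLinearMap.ext fun x => ?_
  apply sub_eq_zero.mp
  apply vec_ext_eb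
  intro n
  rw [inner_sub_right]
  simp only [ContinuousLinearMap.comp_apply, ContinuousLinearMap.one_apply]
  rw [ContinuousLinearMap.adjoint_inner_right, shift_inner S hS]
  ring

lemma shift_adjoint_eb_zero : (ContinuousLinearMap.adjoint S) (eb 0) = 0 := by
  apply vec_ext_eb
  intro n
  rw [ContinuousLinearMap.adjoint_inner_right, hS, inner_eb_eb]
  simp

lemma shift_adjoint_eb_succ (m : ℕ) :
    (ContinuousLinearMap.adjoint S) (eb (m + 1)) = eb m := by
  apply sub_eq_zero.mp
  apply vec_ext_eb
  intro n
  rw [inner_sub_right, ContinuousLinearMap.adjoint_inner_right, hS, inner_eb_eb, inner_eb_eb]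
  simp

/-- The rank one projection onto `eb 0`. -/
def P0 : H →L[ℂ] H := (innerSL ℂ (eb 0)).smulRight (eb 0)

lemma shift_comp_adjoint : S.comp (ContinuousLinearMap.adjoint S) = 1 - P0 := by
  apply clm_ext_eb
  intro n
  simp only [ContinuousLinearMap.comp_apply, ContinuousLinearMap.sub_apply,
    ContinuousLinearMap.one_apply, P0, ContinuousLinearMap.smulRight_apply, innerSL_apply_apply]
  cases n with
  | zero =>
    rw [shift_adjoint_eb_zero S hS, inner_eb_eb]
    simp
  | succ m =>
    rw [shift_adjoint_eb_succ S hS, hS, inner_eb_eb]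
    simp

end Shift

lemma P0_compact : IsCompactOperator (P0 : H →L[ℂ] H) := by
  refine ⟨(fun c : ℂ => c • (eb 0 : H)) '' Metric.closedBall 0 1, ?_, ?_⟩
  · exact ((isCompact_closedBall 0 1).image (by fun_prop))
  · have : Metric.closedBall (0 : H) 1 ⊆ P0 ⁻¹' ((fun c : ℂ => c • (eb 0 : H)) '' Metric.closedBall 0 1) := by
      intro x hx
      simp only [Metric.mem_closedBall, dist_zero_right] at hx
      refine ⟨⟪eb 0, x⟫_ℂ, ?_, rfl⟩
      simp only [Metric.mem_closedBall, dist_zero_right]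
      calc ‖⟪eb 0, x⟫_ℂ‖ ≤ ‖(eb 0 : H)‖ * ‖x‖ := norm_inner_le_norm _ _
        _ ≤ 1 * 1 := by
            apply mul_le_mul _ hx (norm_nonneg _) zero_le_one
            have : ⟪(eb 0 : H), eb 0⟫_ℂ = 1 := by rw [inner_eb_eb]; simp
            have h2 : (‖(eb 0 : H)‖ : ℂ) ^ 2 = 1 := by
              rw [← this, inner_self_eq_norm_sq_to_K]; norm_num
            have h3 : ‖(eb 0 : H)‖ ^ 2 = 1 := by exact_mod_cast h2
            nlinarith [norm_nonneg (eb 0 : H)]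
        _ = 1 := by norm_num
    exact Filter.mem_of_superset (Metric.closedBall_mem_nhds 0 zero_lt_one) this

lemma compact_approx (K : H →L[ℂ] H) (hK : IsCompactOperator K) :
    ∃ F E : H →L[ℂ] H, K = E + F ∧ ‖E‖ < 1 ∧
      FiniteDimensional ℂ (LinearMap.range (F : H →ₗ[ℂ] H)) := by
  classical
  have hcomp : IsCompact (closure (K '' Metric.closedBall 0 1)) :=
    hK.isCompact_closure_image_closedBall 1
  have htb : TotallyBounded (K '' Metric.closedBall 0 1) :=
    (hcomp.totallyBounded).subset subset_closure
  obtain ⟨t, htfin, hcover⟩ := (Metric.totallyBounded_iff.mp htb) (1/4) (by norm_num)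
  -- for each y pick an approximation in the span of the basis
  have hz : ∀ y : H, ∃ z : H, z ∈ Submodule.span ℂ (Set.range eb) ∧ ‖y - z‖ < 1/4 := by
    intro y
    have := dense_span_eb y
    rw [Metric.mem_closure_iff] at this
    obtain ⟨z, hz1, hz2⟩ := this (1/4) (by norm_num)
    exact ⟨z, hz1, by rwa [← dist_eq_norm]⟩
  choose zf hzf1 hzf2 using hz
  set W : Submodule ℂ H := Submodule.span ℂ (zf '' t) with hW
  haveI : FiniteDimensional ℂ W := Module.Finite.span_of_finite ℂ (htfin.image zf)
  haveI : CompleteSpace W := FiniteDimensional.complete ℂ W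
  set P : H →L[ℂ] H := W.subtypeL.comp (orthogonalProjection W) with hP
  set F := P.comp K with hF
  set E := K - F with hE
  have hPapp : ∀ v : H, P v = (orthogonalProjection W v : H) := fun v => rfl
  refine ⟨F, E, by rw [hE]; abel, ?_, ?_⟩
  · -- norm bound
    have hball : ∀ x : H, ‖x‖ ≤ 1 → ‖E x‖ ≤ 1/2 := by
      intro x hx
      have hKx : K x ∈ K '' Metric.closedBall 0 1 :=
        ⟨x, by simpa [Metric.mem_closedBall, dist_zero_right] using hx, rfl⟩
      obtain ⟨y, hyt, hy⟩ := Set.mem_iUnion₂.mp (hcover hKx)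
      have hzW : zf y ∈ W := Submodule.subset_span ⟨y, hyt, rfl⟩
      have hmin : ‖K x - (orthogonalProjection W (K x) : H)‖ ≤ ‖K x - zf y‖ := by
        rw [show (orthogonalProjection W (K x) : H) = W.starProjection (K x) from rfl,
          Submodule.starProjection_minimal]
        exact ciInf_le ⟨0, fun a ⟨v, hv⟩ => hv ▸ norm_nonneg _⟩ (⟨zf y, hzW⟩ : W)
      have hEx : E x = K x - (orthogonalProjection W (K x) : H) := by
        rw [hE, ContinuousLinearMap.sub_apply, hF, ContinuousLinearMap.comp_apply, hPapp]
      rw [hEx]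
      calc ‖K x - (orthogonalProjection W (K x) : H)‖ ≤ ‖K x - zf y‖ := hmin
        _ ≤ ‖K x - y‖ + ‖y - zf y‖ := by
            have : K x - zf y = (K x - y) + (y - zf y) := by abel
            rw [this]; exact norm_add_le _ _
        _ ≤ 1/4 + 1/4 := by
            apply add_le_add
            · rw [← dist_eq_norm]; exact le_of_lt (Metric.mem_ball.mp hy)
            · exact le_of_lt (hzf2 y)
        _ = 1/2 := by norm_num
    have hopnorm : ‖E‖ ≤ 1/2 := by
      apply ContinuousLinearMap.opNorm_le_bound E (by norm_num)
      intro x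
      by_cases hx0 : x = 0
      · simp [hx0]
      · set c : ℂ := (‖x‖ : ℂ) with hc
        have hc0 : c ≠ 0 := by
          simp [hc, norm_eq_zero, hx0]
        set u : H := c⁻¹ • x with hu
        have hxu : x = c • u := by
          rw [hu, smul_smul, mul_inv_cancel₀ hc0, one_smul]
        have hnu : ‖u‖ = 1 := by
          rw [hu, norm_smul]
          simp [hc, norm_inv]
          rw [inv_mul_cancel₀ (norm_ne_zero_iff.mpr hx0)]
        calc ‖E x‖ = ‖E (c • u)‖ := by rw [← hxu]
          _ = ‖c‖ * ‖E u‖ := by rw [map_smul, norm_smul]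
          _ ≤ ‖c‖ * (1/2) := by
              apply mul_le_mul_of_nonneg_left (hball u (le_of_eq hnu)) (norm_nonneg c)
          _ = 1/2 * ‖x‖ := by
              simp [hc]
              ring
    linarith
  · -- finite rank
    apply Submodule.finiteDimensional_of_le (S₂ := W)
    rintro _ ⟨x, rfl⟩
    show F x ∈ W
    have : F x = (orthogonalProjection W (K x) : H) := by
      rw [hF, ContinuousLinearMap.comp_apply, hPapp]
    rw [this]
    exact Submodule.coe_mem _

lemma coe_one_add (K : H →L[ℂ] H) :
    ((1 + K : H →L[ℂ] H) : H →ₗ[ℂ] H) = LinearMap.id + (K : H →ₗ[ℂ] H) := by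
  ext x; rfl

lemma LFred_one_add_compact (K : H →L[ℂ] H) (hK : IsCompactOperator K) :
    LFred ((1 + K : H →L[ℂ] H) : H →ₗ[ℂ] H) ∧
      lind ((1 + K : H →L[ℂ] H) : H →ₗ[ℂ] H) = 0 := by
  obtain ⟨F, E, hKE, hE, hF⟩ := compact_approx K hK
  set u : (H →L[ℂ] H)ˣ := Units.oneSub (-E) (by rwa [norm_neg]) with hudef
  have hu : (u : H →L[ℂ] H) = 1 + E := by
    show 1 - (-E) = 1 + E
    rw [sub_neg_eq_add]
  set F' : H →L[ℂ] H := (↑u⁻¹ : H →L[ℂ] H) * F with hF'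
  have hfact : (1 + K : H →L[ℂ] H) = (u : H →L[ℂ] H) * (1 + F') := by
    rw [mul_add, mul_one, hF', ← mul_assoc, Units.mul_inv, one_mul, hu, hKE, add_assoc]
  have hbij : Function.Bijective ((u : H →L[ℂ] H) : H →ₗ[ℂ] H) := by
    rw [Function.bijective_iff_has_inverse]
    refine ⟨(↑u⁻¹ : H →L[ℂ] H), fun x => ?_, fun x => ?_⟩
    · show ((↑u⁻¹ : H →L[ℂ] H) * (u : H →L[ℂ] H)) x = x
      rw [Units.inv_mul]; rfl
    · show ((u : H →L[ℂ] H) * (↑u⁻¹ : H →L[ℂ] H)) x = x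
      rw [Units.mul_inv]; rfl
  have h1 := LFred.of_bijective hbij
  have hF'fin : FiniteDimensional ℂ (LinearMap.range (F' : H →ₗ[ℂ] H)) := by
    have hcomp : (F' : H →ₗ[ℂ] H) = ((↑u⁻¹ : H →L[ℂ] H) : H →ₗ[ℂ] H) ∘ₗ (F : H →ₗ[ℂ] H) := by
      ext x; rfl
    rw [hcomp, LinearMap.range_comp]
    infer_instance
  have h2 := lind_one_add_finiteRank (𝕜 := ℂ) (F' : H →ₗ[ℂ] H) hF'fin
  have hlin : ((1 + K : H →L[ℂ] H) : H →ₗ[ℂ] H) =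
      ((u : H →L[ℂ] H) : H →ₗ[ℂ] H) ∘ₗ (LinearMap.id + (F' : H →ₗ[ℂ] H)) := by
    rw [hfact, ← coe_one_add]; rfl
  have hc := LFred.comp (f := ((u : H →L[ℂ] H) : H →ₗ[ℂ] H))
    (g := LinearMap.id + (F' : H →ₗ[ℂ] H)) h1.1 h2.1
  rw [← hlin] at hc
  refine ⟨hc.1, ?_⟩
  rw [hc.2, h1.2, h2.2]; norm_num

section Calkin

variable {Q : Type} [CStarAlgebra Q]
  (θ : (H →L[ℂ] H) →⋆ₐ[ℂ] Q)
  (hθ : Function.Surjective θ)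
  (hker : ∀ T : H →L[ℂ] H, θ T = 0 ↔ IsCompactOperator T)

include hθ hker

lemma unit_LFred (X : H →L[ℂ] H) (hX : IsUnit (θ X)) : LFred (X : H →ₗ[ℂ] H) := by
  obtain ⟨w, hw⟩ := hX
  obtain ⟨A, hA⟩ := hθ ↑w⁻¹
  have hK₁ : IsCompactOperator (A * X - 1 : H →L[ℂ] H) := by
    apply (hker _).mp
    rw [map_sub, map_mul, hA, ← hw, map_one, Units.inv_mul, sub_self]
  have hK₂ : IsCompactOperator (X * A - 1 : H →L[ℂ] H) := by
    apply (hker _).mp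
    rw [map_sub, map_mul, hA, ← hw, map_one, Units.mul_inv, sub_self]
  have h1 := LFred_one_add_compact _ hK₁
  have h2 := LFred_one_add_compact _ hK₂
  have he1 : (1 + (A * X - 1) : H →L[ℂ] H) = A * X := by abel
  have he2 : (1 + (X * A - 1) : H →L[ℂ] H) = X * A := by abel
  constructor
  · -- kernel
    have hle : LinearMap.ker (X : H →ₗ[ℂ] H) ≤
        LinearMap.ker (((1 + (A * X - 1) : H →L[ℂ] H)) : H →ₗ[ℂ] H) := by
      intro x hx
      rw [LinearMap.mem_ker] at hx ⊢
      rw [he1]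
      show (A * X) x = 0
      rw [ContinuousLinearMap.mul_apply]
      have : X x = 0 := hx
      rw [this, map_zero]
    haveI := h1.1.fk
    exact Submodule.finiteDimensional_of_le hle
  · -- cokernel
    have hle : LinearMap.range (((1 + (X * A - 1) : H →L[ℂ] H)) : H →ₗ[ℂ] H) ≤
        LinearMap.range (X : H →ₗ[ℂ] H) := by
      rintro _ ⟨x, rfl⟩
      refine ⟨A x, ?_⟩
      show X (A x) = (1 + (X * A - 1) : H →L[ℂ] H) x
      rw [he2]
      rfl
    set q := Submodule.mapQ (LinearMap.range (((1 + (X * A - 1) : H →L[ℂ] H)) : H →ₗ[ℂ] H))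
      (LinearMap.range (X : H →ₗ[ℂ] H)) LinearMap.id
      (fun x hx => by simpa using hle hx) with hq
    have hqsurj : Function.Surjective q := by
      intro y
      obtain ⟨x, rfl⟩ := (LinearMap.range (X : H →ₗ[ℂ] H)).mkQ_surjective y
      exact ⟨Submodule.Quotient.mk x, by rw [hq, Submodule.mapQ_apply]; rfl⟩
    haveI := h2.1.fc
    exact Module.Finite.of_surjective q hqsurj

end Calkin

lemma lind_shift (S : H →L[ℂ] H) (hS : ∀ n : ℕ, S (eb n) = eb (n + 1)) :
    lind (S : H →ₗ[ℂ] H) = -1 := by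
  have hinj : Function.Injective S := by
    intro x y hxy
    have h1 := congrArg (fun f : H →L[ℂ] H => f x) (shift_adjoint_comp S hS)
    have h2 := congrArg (fun f : H →L[ℂ] H => f y) (shift_adjoint_comp S hS)
    simp only [ContinuousLinearMap.comp_apply, ContinuousLinearMap.one_apply] at h1 h2
    rw [← h1, ← h2, hxy]
  have hker0 : LinearMap.ker (S : H →ₗ[ℂ] H) = ⊥ := LinearMap.ker_eq_bot.mpr hinj
  set φ : H →L[ℂ] ℂ := innerSL ℂ (eb 0) with hφ
  have hsub : φ.comp S = 0 := by
    apply clm_ext_eb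
    intro n
    simp only [ContinuousLinearMap.comp_apply, ContinuousLinearMap.zero_apply, hφ, innerSL_apply_apply]
    rw [hS, inner_eb_eb]
    simp
  have hrange : LinearMap.range (S : H →ₗ[ℂ] H) = LinearMap.ker (φ : H →ₗ[ℂ] ℂ) := by
    ext y
    constructor
    · rintro ⟨x, rfl⟩
      show φ (S x) = 0
      have := congrArg (fun f : H →L[ℂ] ℂ => f x) hsub
      simpa using this
    · intro hy
      have hy' : ⟪eb 0, y⟫_ℂ = 0 := hy
      refine ⟨ContinuousLinearMap.adjoint S y, ?_⟩
      have := congrArg (fun f : H →L[ℂ] H => f y) (shift_comp_adjoint S hS)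
      simp only [ContinuousLinearMap.comp_apply, ContinuousLinearMap.sub_apply,
        ContinuousLinearMap.one_apply] at this
      show S (ContinuousLinearMap.adjoint S y) = y
      rw [this]
      have : P0 y = 0 := by
        show (⟪eb 0, y⟫_ℂ) • (eb 0 : H) = 0
        rw [hy', zero_smul]
      rw [this, sub_zero]
  have hφsurj : LinearMap.range (φ : H →ₗ[ℂ] ℂ) = ⊤ := by
    rw [LinearMap.range_eq_top]
    intro c
    refine ⟨c • eb 0, ?_⟩
    show ⟪(eb 0 : H), c • (eb 0 : H)⟫_ℂ = c
    rw [inner_smul_right, inner_eb_eb]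
    simp
  have e := LinearMap.quotKerEquivRange (φ : H →ₗ[ℂ] ℂ)
  unfold lind
  rw [hker0, finrank_bot, hrange, e.finrank_eq, hφsurj, finrank_top, Module.finrank_self]
  norm_num

end

local notation "H'" => lp (fun _ : ℕ => ℂ) 2

/-- The image of the unilateral shift in the Calkin algebra has no square root.
Here `H = ℓ²(ℕ)`, the unilateral shift `S` is characterized by `S eₙ = eₙ₊₁` on the
standard orthonormal basis `eₙ = lp.single 2 n 1`, and the Calkin algebra is
represented as any C*-algebra `Q` together with a surjective ⋆-homomorphism
`θ : B(ℓ²(ℕ)) → Q` whose kernel is exactly the ideal of compact operators. -/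
theorem calkin_shift_has_no_square_root
    (Q : Type) [CStarAlgebra Q]
    (θ : (lp (fun _ : ℕ => ℂ) 2 →L[ℂ] lp (fun _ : ℕ => ℂ) 2) →⋆ₐ[ℂ] Q)
    (hθ : Function.Surjective θ)
    (hker : ∀ T : lp (fun _ : ℕ => ℂ) 2 →L[ℂ] lp (fun _ : ℕ => ℂ) 2,
      θ T = 0 ↔ IsCompactOperator T)
    (S : lp (fun _ : ℕ => ℂ) 2 →L[ℂ] lp (fun _ : ℕ => ℂ) 2)
    (hS : ∀ n : ℕ, S (lp.single 2 n 1) = lp.single 2 (n + 1) 1) :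
    ¬ ∃ y : Q, y * y = θ S := by
  rintro ⟨y, hy⟩
  set S' := ContinuousLinearMap.adjoint S with hS'def
  have hc1 : S' * S = 1 := shift_adjoint_comp S hS
  have hc2 : S * S' = 1 - P0 := shift_comp_adjoint S hS
  have hP0 : θ P0 = 0 := (hker P0).mpr P0_compact
  have hz1 : θ S' * θ S = 1 := by rw [← map_mul, hc1, map_one]
  have hz2 : θ S * θ S' = 1 := by
    rw [← map_mul, hc2, map_sub, map_one, hP0, sub_zero]
  have hl : (θ S' * y) * y = 1 := by rw [mul_assoc, hy, hz1]
  have hr : y * (y * θ S') = 1 := by rw [← mul_assoc, hy, hz2]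
  have hlr : θ S' * y = y * θ S' := by
    calc θ S' * y = (θ S' * y) * (y * (y * θ S')) := by rw [hr, mul_one]
      _ = ((θ S' * y) * y) * (y * θ S') := by rw [← mul_assoc, ← mul_assoc]
      _ = y * θ S' := by rw [hl, one_mul]
  set w : Qˣ := ⟨y, y * θ S', hr, by rw [← hlr]; exact hl⟩ with hwdef
  have hwval : (w : Q) = y := rfl
  have hwwval : ((w * w : Qˣ) : Q) = θ S := by
    rw [Units.val_mul, hwval, hy]
  -- lift y to T
  obtain ⟨T, hT⟩ := hθ y
  have hθT : IsUnit (θ T) := by rw [hT, ← hwval]; exact w.isUnit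
  have hfT := unit_LFred θ hθ hker T hθT
  -- lift the inverse of θ S to A
  obtain ⟨A, hA⟩ := hθ (↑(w * w)⁻¹)
  have hθA : IsUnit (θ A) := by rw [hA]; exact (w * w)⁻¹.isUnit
  have hfA := unit_LFred θ hθ hker A hθA
  -- the two compact errors
  have hC1 : IsCompactOperator (A * (T * T) - 1 : H' →L[ℂ] H') := by
    apply (hker _).mp
    rw [map_sub, map_mul, map_mul, hA, hT, map_one]
    have : y * y = ((w * w : Qˣ) : Q) := by rw [hwwval, hy]
    rw [this, Units.inv_mul, sub_self]
  have hC2 : IsCompactOperator (A * S - 1 : H' →L[ℂ] H') := by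
    apply (hker _).mp
    rw [map_sub, map_mul, hA, map_one, ← hwwval, Units.inv_mul, sub_self]
  have h1 := LFred_one_add_compact _ hC1
  have h2 := LFred_one_add_compact _ hC2
  have he1 : (1 + (A * (T * T) - 1) : H' →L[ℂ] H') = A * (T * T) := by abel
  have he2 : (1 + (A * S - 1) : H' →L[ℂ] H') = A * S := by abel
  -- coercion identities
  have hcoe1 : ((1 + (A * (T * T) - 1) : H' →L[ℂ] H') : H' →ₗ[ℂ] H') =
      (A : H' →ₗ[ℂ] H') ∘ₗ ((T * T : H' →L[ℂ] H') : H' →ₗ[ℂ] H') := by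
    rw [he1]; rfl
  have hcoe2 : ((1 + (A * S - 1) : H' →L[ℂ] H') : H' →ₗ[ℂ] H') =
      (A : H' →ₗ[ℂ] H') ∘ₗ (S : H' →ₗ[ℂ] H') := by
    rw [he2]; rfl
  have hcoeTT : ((T * T : H' →L[ℂ] H') : H' →ₗ[ℂ] H') =
      (T : H' →ₗ[ℂ] H') ∘ₗ (T : H' →ₗ[ℂ] H') := rfl
  -- index computations
  have hTT := LFred.comp (f := (T : H' →ₗ[ℂ] H')) (g := (T : H' →ₗ[ℂ] H')) hfT hfT
  have hfTT : LFred ((T * T : H' →L[ℂ] H') : H' →ₗ[ℂ] H') := by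
    rw [hcoeTT]; exact hTT.1
  have hATT := LFred.comp (f := (A : H' →ₗ[ℂ] H')) hfA hfTT
  have hAS := LFred.comp (f := (A : H' →ₗ[ℂ] H')) (g := (S : H' →ₗ[ℂ] H')) hfA
    (unit_LFred θ hθ hker S (by rw [← hwwval]; exact (w * w).isUnit))
  have E1 : lind ((A : H' →ₗ[ℂ] H') ∘ₗ ((T * T : H' →L[ℂ] H') : H' →ₗ[ℂ] H')) = 0 := by
    rw [← hcoe1]; exact h1.2
  have E2 : lind ((A : H' →ₗ[ℂ] H') ∘ₗ (S : H' →ₗ[ℂ] H')) = 0 := by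
    rw [← hcoe2]; exact h2.2
  rw [hATT.2] at E1
  rw [hAS.2] at E2
  have ES : lind (S : H' →ₗ[ℂ] H') = -1 := lind_shift S hS
  have ETT : lind ((T * T : H' →L[ℂ] H') : H' →ₗ[ℂ] H') =
      lind (T : H' →ₗ[ℂ] H') + lind (T : H' →ₗ[ℂ] H') := by
    rw [hcoeTT]; exact hTT.2
  omega
end
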